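/- arXiv:1406.6193 — 3 statements merged into one kernel-verified Lean document; each statement's English description precedes it below -/
import Mathlib

section
/- Let a > 0 be real, n a natural number, and x a complex number that is not a nonnegative integer less than n (so that (−x)_n ≠ 0). Then the Charlier polynomial satisfies the identity a^n · C_n(x;a)/(−x)_n = ∑_{k=0}^n [(n−k+1)_k/(1)_k] · a^k/(n−k−x)_k. -/
open Filter Topology Finset

/-- The Pochhammer symbol (rising factorial) `(u)_k = u (u+1) ⋯ (u+k-1)`, with `(u)_0 = 1`. -/
noncomputable def poch (u : ℂ) (k : ℕ) : ℂ := ∏ i ∈ range k, (u + i)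

/-- The Charlier polynomial `C_n(x; a) = ∑_{j=0}^n (−n)_j (−x)_j / j! · (−1/a)^j`. -/
noncomputable def charlier (a : ℝ) (n : ℕ) (x : ℂ) : ℂ :=
  ∑ j ∈ range (n + 1),
    poch (-(n : ℂ)) j * poch (-x) j / (j.factorial : ℂ) * (-(1 / (a : ℂ))) ^ j

lemma poch_one_eq (k : ℕ) : poch 1 k = (k.factorial : ℂ) := by
  induction k with
  | zero => simp [poch]
  | succ k ih =>
    rw [poch, Finset.prod_range_succ, ← poch, ih, Nat.factorial_succ]
    push_cast
    ring

lemma poch_split (u : ℂ) (m k : ℕ) : poch u (m + k) = poch u m * poch (u + m) k := by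
  rw [poch, Finset.prod_range_add, ← poch, poch]
  congr 1
  refine Finset.prod_congr rfl fun i _ => ?_
  push_cast
  ring

lemma poch_nat_succ (m k : ℕ) :
    poch ((m : ℂ) + 1) k * (m.factorial : ℂ) = ((m + k).factorial : ℂ) := by
  induction k with
  | zero => simp [poch]
  | succ k ih =>
    rw [poch, Finset.prod_range_succ, ← poch]
    have h : (m + (k + 1)).factorial = (m + k).factorial * (m + k + 1) := by
      rw [show m + (k + 1) = (m + k) + 1 from rfl, Nat.factorial_succ]; ring
    rw [h]
    push_cast
    rw [← ih]
    ring

lemma poch_neg_nat (n j : ℕ) (h : j ≤ n) :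
    poch (-(n : ℂ)) j * ((n - j).factorial : ℂ) = (-1) ^ j * (n.factorial : ℂ) := by
  induction j with
  | zero => simp [poch]
  | succ j ih =>
    have hj : j ≤ n := le_of_lt h
    have hfac : (n - j).factorial = (n - j) * (n - (j + 1)).factorial := by
      rw [show n - j = (n - (j + 1)) + 1 by omega, Nat.factorial_succ]
    have hcast : -(n : ℂ) + j = -((n - j : ℕ) : ℂ) := by
      push_cast [Nat.cast_sub hj]; ring
    rw [poch, Finset.prod_range_succ, ← poch, hcast]
    have h3 := ih hj
    rw [hfac] at h3
    push_cast at h3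
    linear_combination -h3

/-- For `a > 0` and `x` not a nonnegative integer less than `n` (so that `(−x)_n ≠ 0`),
`aⁿ C_n(x;a) / (−x)_n = ∑_{k=0}^n (n−k+1)_k / (1)_k · a^k / (n−k−x)_k`. -/
theorem charlier_identity (a : ℝ) (ha : 0 < a) (n : ℕ) (x : ℂ)
    (hx : ∀ m : ℕ, m < n → x ≠ (m : ℂ)) :
    (a : ℂ) ^ n * charlier a n x / poch (-x) n =
      ∑ k ∈ range (n + 1),
        poch ((n : ℂ) - (k : ℂ) + 1) k / poch 1 k * (a : ℂ) ^ k /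
          poch ((n : ℂ) - (k : ℂ) - x) k := by
  have ha0 : (a : ℂ) ≠ 0 := by exact_mod_cast ne_of_gt ha
  rw [charlier, mul_comm, Finset.sum_mul, Finset.sum_div, ← Finset.sum_range_reflect]
  refine Finset.sum_congr rfl fun k hk => ?_
  have hkn : k ≤ n := Nat.lt_succ_iff.mp (Finset.mem_range.mp hk)
  have hred : n + 1 - 1 - k = n - k := by omega
  rw [hred]
  -- cast of n - k
  have hcnk : ((n - k : ℕ) : ℂ) = (n : ℂ) - (k : ℂ) := by
    push_cast [Nat.cast_sub hkn]; ring
  -- split poch (-x) n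
  have hsplit : poch (-x) n = poch (-x) (n - k) * poch ((n : ℂ) - (k : ℂ) - x) k := by
    have := poch_split (-x) (n - k) k
    rw [show (n - k) + k = n by omega] at this
    rw [this]
    congr 1
    rw [hcnk]
    ring_nf
  -- nonvanishing facts
  have hQ : poch ((n : ℂ) - (k : ℂ) - x) k ≠ 0 := by
    rw [poch]
    refine Finset.prod_ne_zero_iff.mpr fun i hi => ?_
    have him : n - k + i < n := by
      have := Finset.mem_range.mp hi; omega
    have := hx (n - k + i) him
    intro hzero
    apply this
    have : (n : ℂ) - (k : ℂ) + i = x := by linear_combination hzero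
    rw [← this]
    push_cast [Nat.cast_sub hkn]
    ring
  have hP0 : poch (-x) (n - k) ≠ 0 := by
    rw [poch]
    refine Finset.prod_ne_zero_iff.mpr fun i hi => ?_
    have him : i < n := by
      have := Finset.mem_range.mp hi; omega
    have := hx i him
    intro hzero
    exact this (by linear_combination -hzero)
  have hkf : ((k.factorial : ℂ)) ≠ 0 := by exact_mod_cast k.factorial_ne_zero
  have hnkf : (((n - k).factorial : ℂ)) ≠ 0 := by exact_mod_cast (n - k).factorial_ne_zero
  -- explicit values
  have hA : poch (-(n : ℂ)) (n - k) = (-1) ^ (n - k) * (n.factorial : ℂ) / (k.factorial : ℂ) := by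
    have h1 := poch_neg_nat n (n - k) (Nat.sub_le n k)
    rw [show n - (n - k) = k by omega] at h1
    rw [eq_div_iff hkf]
    exact h1
  have hB : poch ((n : ℂ) - (k : ℂ) + 1) k = (n.factorial : ℂ) / ((n - k).factorial : ℂ) := by
    have h2 := poch_nat_succ (n - k) k
    rw [show (n - k) + k = n by omega, hcnk] at h2
    rw [eq_div_iff hnkf]
    exact h2
  have hpow : (a : ℂ) ^ n = (a : ℂ) ^ (n - k) * (a : ℂ) ^ k := by
    rw [← pow_add]; congr 1; omega
  have hneg : (-(1 / (a : ℂ))) ^ (n - k) = (-1) ^ (n - k) / (a : ℂ) ^ (n - k) := by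
    rw [neg_pow, one_div, inv_pow, div_eq_mul_inv]
  have hsq : ((-1 : ℂ)) ^ (n - k) * ((-1 : ℂ)) ^ (n - k) = 1 := by
    rw [← mul_pow]; norm_num
  rw [poch_one_eq, hsplit, hA, hB, hpow, hneg]
  rcases neg_one_pow_eq_or ℂ (n - k) with h | h <;> rw [h] <;> field_simp <;> ring
end

section
/- Let a > 0 be real. Let Ĉ_n(x;a) be the monic Charlier polynomials and let C*_n(x;a) be the associated Charlier polynomials, both defined by the recurrence x·p_n = p_{n+1} + (n+a)·p_n + a·n·p_{n−1}, with initial conditions Ĉ_{−1} = 0, Ĉ_0 = 1 for the monic family and C*_0 = 0, C*_1 = 1 for the associated family. Then for every complex number z not lying in [0,∞), lim_{n→∞} e^a · C*_n(z;a)/Ĉ_n(z;a) = ∑_{k=0}^∞ (a^k/k!) · 1/(z−k). -/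
open Filter Topology Finset

namespace ACM

noncomputable def ff (x : ℂ) (j : ℕ) : ℂ := ∏ i ∈ Finset.range j, (x - i)

lemma ff_zero (x : ℂ) : ff x 0 = 1 := by simp [ff]

lemma ff_succ (x : ℂ) (j : ℕ) : ff x (j+1) = ff x j * (x - j) := by
  simp [ff, Finset.prod_range_succ]

lemma x_mul_ff (x : ℂ) (j : ℕ) : x * ff x j = ff x (j+1) + (j:ℂ) * ff x j := by
  rw [ff_succ]; ring

/-- two-step induction -/
lemma two_step {P : ℕ → Prop} (h0 : P 0) (h1 : P 1)
    (hstep : ∀ n, P n → P (n+1) → P (n+2)) : ∀ n, P n := by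
  intro n
  have H : P n ∧ P (n+1) := by
    induction n with
    | zero => exact ⟨h0, h1⟩
    | succ k ih => exact ⟨ih.2, hstep k ih.1 ih.2⟩
  exact H.1

lemma chFormula (a : ℝ) (Ch : ℕ → ℂ → ℂ)
    (hCh0 : ∀ x : ℂ, Ch 0 x = 1)
    (hChrec0 : ∀ x : ℂ, x * Ch 0 x = Ch 1 x + (a : ℂ) * Ch 0 x)
    (hChrec : ∀ x : ℂ, ∀ n : ℕ, x * Ch (n + 1) x =
      Ch (n + 2) x + (((n : ℂ) + 1) + (a : ℂ)) * Ch (n + 1) x +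
        (a : ℂ) * ((n : ℂ) + 1) * Ch n x) :
    ∀ n, ∀ x : ℂ, Ch n x
      = ∑ m ∈ range (n+1), (n.choose m : ℂ) * (-(a:ℂ))^m * ff x (n - m) := by
  set q : ℂ := -(a:ℂ) with hq
  apply two_step
  · intro x; simp [hCh0, ff_zero]
  · intro x
    have h1 : Ch 1 x = x - (a:ℂ) := by
      have := hChrec0 x; rw [hCh0] at this; linear_combination -this
    rw [h1]
    simp [Finset.sum_range_succ, ff_succ, ff_zero, hq]
    ring
  · intro n ih0 ih1 x
    have hrec : Ch (n+2) x = x * Ch (n+1) x - (((n:ℂ)+1) - q) * Ch (n+1) x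
        - (-q) * ((n:ℂ)+1) * Ch n x := by
      have := hChrec x n; rw [hq]; push_cast; linear_combination -this
    set SA : ℂ := ∑ m ∈ range (n+2), ((n+1).choose m : ℂ) * q^m * ff x (n+2-m) with hSA
    set SB : ℂ := ∑ m ∈ range (n+2), ((n+1).choose m : ℂ) * q^m * ff x (n+1-m) with hSB
    set SBm : ℂ := ∑ m ∈ range (n+2), (m:ℂ) * (((n+1).choose m : ℂ) * q^m * ff x (n+1-m)) with hSBm
    set SC : ℂ := ∑ m ∈ range (n+1), (n.choose m : ℂ) * q^m * ff x (n-m) with hSC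
    have ih1' : Ch (n+1) x = SB := by rw [ih1 x, hSB]
    have ih0' : Ch n x = SC := by rw [ih0 x, hSC]
    have h_xCh : x * Ch (n+1) x = SA + ((n:ℂ)+1) * SB - SBm := by
      rw [ih1', hSB, Finset.mul_sum, Finset.mul_sum, hSA, hSBm,
        ← Finset.sum_add_distrib, ← Finset.sum_sub_distrib]
      apply Finset.sum_congr rfl
      intro m hm
      have hmle : m ≤ n+1 := by simpa [Nat.lt_succ_iff] using hm
      have h2 : n+2-m = (n+1-m)+1 := by omega
      have h3 : ((n+1-m : ℕ) : ℂ) = ((n:ℂ)+1) - m := by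
        rw [Nat.cast_sub hmle]; push_cast; ring
      have h4 := x_mul_ff x (n+1-m)
      rw [h3] at h4
      rw [h2]
      linear_combination (((n+1).choose m : ℂ)) * q^m * h4
    have hA : SBm = ((n:ℂ)+1) * q * SC := by
      rw [hSBm, Finset.sum_range_succ'
        (fun m => (m:ℂ) * (((n+1).choose m : ℂ) * q^m * ff x (n+1-m))) (n+1)]
      have hper : ∀ m ∈ range (n+1),
          (((m:ℕ)+1 : ℕ):ℂ) * (((n+1).choose (m+1) : ℂ) * q^(m+1) * ff x (n+1-(m+1)))
          = ((n:ℂ)+1) * q * ((n.choose m : ℂ) * q^m * ff x (n-m)) := by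
        intro m hm
        have hchoose : (m+1) * ((n+1).choose (m+1)) = (n+1) * (n.choose m) := by
          rw [mul_comm, ← Nat.add_one_mul_choose_eq]
        have hc : ((m:ℂ)+1) * (((n+1).choose (m+1) : ℕ):ℂ)
            = ((n:ℂ)+1) * ((n.choose m : ℕ):ℂ) := by
          exact_mod_cast congrArg (fun t : ℕ => (t:ℂ)) hchoose
        have hff : n+1-(m+1) = n-m := by omega
        rw [hff]
        push_cast
        try linear_combination (q^(m+1) * ff x (n-m)) * hc
      rw [Finset.sum_congr rfl hper, hSC, Finset.mul_sum]
      simp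
    have hB : ∑ m ∈ range (n+3), ((n+2).choose m : ℂ) * q^m * ff x (n+2-m)
        = SA + q * SB := by
      rw [Finset.sum_range_succ'
        (fun m => ((n+2).choose m : ℂ) * q^m * ff x (n+2-m)) (n+2)]
      have hper : ∀ m ∈ range (n+2),
          ((n+2).choose (m+1) : ℂ) * q^(m+1) * ff x (n+2-(m+1))
          = q * (((n+1).choose m : ℂ) * q^m * ff x (n+1-m))
            + ((n+1).choose (m+1) : ℂ) * q^(m+1) * ff x (n+1-m) := by
        intro m hm
        have hch : ((n+2).choose (m+1)) = (n+1).choose m + (n+1).choose (m+1) :=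
          Nat.choose_succ_succ (n+1) m
        have hff : n+2-(m+1) = n+1-m := by omega
        rw [hff, hch]
        push_cast
        ring
      rw [Finset.sum_congr rfl hper, Finset.sum_add_distrib]
      have e2 : ∑ m ∈ range (n+2), ((n+1).choose (m+1) : ℂ) * q^(m+1) * ff x (n+1-m)
          = ∑ m ∈ range (n+1), ((n+1).choose (m+1) : ℂ) * q^(m+1) * ff x (n+1-m) := by
        rw [Finset.sum_range_succ]
        have : (n+1).choose (n+2) = 0 := Nat.choose_eq_zero_of_lt (by omega)
        simp [this]
      have e3 : SA = ∑ m ∈ range (n+1), ((n+1).choose (m+1) : ℂ) * q^(m+1) * ff x (n+1-m)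
          + ff x (n+2) := by
        rw [hSA, Finset.sum_range_succ'
          (fun m => ((n+1).choose m : ℂ) * q^m * ff x (n+2-m)) (n+1)]
        congr 1
        · apply Finset.sum_congr rfl
          intro m hm
          have hff : n+2-(m+1) = n+1-m := by omega
          rw [hff]
        · simp
      rw [e2, ← Finset.mul_sum, ← hSB, e3]
      simp
      try ring
    show Ch (n+2) x = ∑ m ∈ range (n+3), ((n+2).choose m : ℂ) * q^m * ff x (n+2-m)
    rw [hB, hrec, h_xCh, ih1', ih0']
    rw [hq] at hA
    linear_combination -hA

noncomputable def wC (a : ℝ) (k : ℕ) : ℂ := (a:ℂ)^k / (k.factorial : ℂ)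

lemma ff_nat_le (k j : ℕ) : ‖ff (k:ℂ) j‖ ≤ (k:ℝ)^j := by
  by_cases h : j ≤ k
  · rw [ff]
    rw [norm_prod]
    calc ∏ i ∈ range j, ‖(k:ℂ) - (i:ℕ)‖ ≤ ∏ i ∈ range j, (k:ℝ) := by
          apply Finset.prod_le_prod
          · intro i _; positivity
          · intro i hi
            have hik : i ≤ k := le_trans (le_of_lt (mem_range.1 hi)) h
            have : ((k:ℂ) - (i:ℕ)) = (((k - i : ℕ):ℕ):ℂ) := by
              push_cast [Nat.cast_sub hik]; ring
            rw [this]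
            simp only [Complex.norm_natCast]
            exact_mod_cast Nat.sub_le k i
      _ = (k:ℝ)^j := by rw [Finset.prod_const, Finset.card_range]
  · push_neg at h
    have : ff (k:ℂ) j = 0 := by
      apply Finset.prod_eq_zero (Finset.mem_range.2 h)
      simp
    rw [this, norm_zero]; positivity

lemma ff_nat_zero {k j : ℕ} (h : k < j) : ff (k:ℂ) j = 0 := by
  apply Finset.prod_eq_zero (Finset.mem_range.2 h); simp

lemma ff_nat_eq (j : ℕ) : ∀ m : ℕ, ff (((m+j:ℕ)):ℂ) j * (m.factorial : ℂ) = ((m+j).factorial : ℂ) := by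
  induction j with
  | zero => intro m; simp [ff]
  | succ j ih =>
    intro m
    have h1 : ff ((m+(j+1):ℕ):ℂ) (j+1)
        = (((m+(j+1):ℕ)):ℂ) * ff (((m+j:ℕ)):ℂ) j := by
      rw [ff, Finset.prod_range_succ', ff]
      have e0 : ((m+(j+1):ℕ):ℂ) - ((0:ℕ):ℂ) = ((m+(j+1):ℕ):ℂ) := by simp
      rw [e0, mul_comm]
      congr 1
      apply Finset.prod_congr rfl
      intro i hi
      push_cast
      ring
    rw [h1]
    have h4 : (m+(j+1)).factorial = (m+j+1) * (m+j).factorial := Nat.factorial_succ (m+j)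
    calc (((m+(j+1):ℕ)):ℂ) * ff (((m+j:ℕ)):ℂ) j * (m.factorial:ℂ)
        = (((m+(j+1):ℕ)):ℂ) * (ff (((m+j:ℕ)):ℂ) j * (m.factorial:ℂ)) := by ring
      _ = (((m+(j+1):ℕ)):ℂ) * ((m+j).factorial : ℂ) := by rw [ih m]
      _ = ((m+(j+1)).factorial : ℂ) := by rw [h4]; push_cast; ring

lemma wC_summable (a : ℝ) : Summable (wC a) := by
  have h := Real.summable_pow_div_factorial a
  have : ∀ k, wC a k = ((a^k / k.factorial : ℝ) : ℂ) := by
    intro k; rw [wC]; push_cast; ring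
  rw [funext this]
  exact Complex.summable_ofReal.2 h

lemma wC_tsum (a : ℝ) : ∑' k, wC a k = (Real.exp a : ℂ) := by
  rw [Complex.ofReal_exp, Complex.exp_eq_exp_ℂ, NormedSpace.exp_eq_tsum_div]
  rfl

lemma mom_eq (a : ℝ) (j : ℕ) :
    Summable (fun k => wC a k * ff (k:ℂ) j)
    ∧ ∑' k, wC a k * ff (k:ℂ) j = (a:ℂ)^j * (Real.exp a : ℂ) := by
  set g : ℕ → ℂ := fun k => wC a k * ff (k:ℂ) j with hgdef
  have hinj : Function.Injective (fun m : ℕ => m + j) := add_left_injective j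
  have hzero : ∀ k ∉ Set.range (fun m : ℕ => m + j), g k = 0 := by
    intro k hk
    rw [Set.mem_range] at hk
    push_neg at hk
    have : k < j := by
      by_contra h
      push_neg at h
      exact hk (k - j) (by omega)
    simp [hgdef, ff_nat_zero this]
  have hcomp : ∀ m, g (m + j) = (a:ℂ)^j * wC a m := by
    intro m
    have hf := ff_nat_eq j m
    have hm : (m.factorial : ℂ) ≠ 0 := by exact_mod_cast Nat.factorial_ne_zero m
    have hmj : ((m+j).factorial : ℂ) ≠ 0 := by exact_mod_cast Nat.factorial_ne_zero (m+j)
    have : ff (((m+j:ℕ)):ℂ) j = ((m+j).factorial : ℂ) / (m.factorial : ℂ) := by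
      field_simp at hf ⊢; linear_combination hf
    simp only [hgdef, wC]
    rw [this]
    field_simp
    ring
  have hsum2 : Summable (fun m => (a:ℂ)^j * wC a m) := (wC_summable a).mul_left _
  have hsumg : Summable g := by
    rw [← hinj.summable_iff hzero]
    exact hsum2.congr (fun m => (hcomp m).symm)
  constructor
  · exact hsumg
  · rw [← hinj.tsum_eq (Function.support_subset_iff'.2 hzero)]
    calc ∑' m, g (m + j) = ∑' m, (a:ℂ)^j * wC a m := tsum_congr hcomp
      _ = (a:ℂ)^j * ∑' m, wC a m := tsum_mul_left
      _ = (a:ℂ)^j * (Real.exp a : ℂ) := by rw [wC_tsum]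
lemma pow_le_factorial_mul_exp (t x : ℝ) (ht : 0 < t) (hx : 0 ≤ x) (n : ℕ) :
    x^n ≤ (n.factorial : ℝ) / t^n * Real.exp (t*x) := by
  have h := Real.pow_div_factorial_le_exp (x := t*x) (by positivity) n
  have hfac : (0:ℝ) < n.factorial := by exact_mod_cast Nat.factorial_pos n
  rw [div_le_iff₀ hfac] at h
  have : (t*x)^n = t^n * x^n := by ring
  rw [this] at h
  rw [div_mul_eq_mul_div, le_div_iff₀ (by positivity)]
  calc x^n * t^n = t^n * x^n := by ring
    _ ≤ Real.exp (t*x) * n.factorial := h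
    _ = n.factorial * Real.exp (t*x) := by ring

lemma weight_le (a t : ℝ) (ha : 0 ≤ a) (ht : 0 < t) (n k : ℕ) :
    ((k:ℝ)+a)^n ≤ (a+1)^n * ((n.factorial:ℝ) / t^n) * Real.exp t * Real.exp (t*k) := by
  have h1 : ((k:ℝ)+a) ≤ (a+1) * ((k:ℝ)+1) := by nlinarith [Nat.cast_nonneg (α := ℝ) k]
  have h2 : ((k:ℝ)+a)^n ≤ ((a+1) * ((k:ℝ)+1))^n := by
    apply pow_le_pow_left₀ (by positivity) h1
  have h3 : ((k:ℝ)+1)^n ≤ (n.factorial : ℝ)/t^n * Real.exp (t*((k:ℝ)+1)) :=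
    pow_le_factorial_mul_exp t _ ht (by positivity) n
  calc ((k:ℝ)+a)^n ≤ ((a+1))^n * ((k:ℝ)+1)^n := by rw [← mul_pow]; exact h2
    _ ≤ (a+1)^n * ((n.factorial : ℝ)/t^n * Real.exp (t*((k:ℝ)+1))) := by
        apply mul_le_mul_of_nonneg_left h3 (by positivity)
    _ = (a+1)^n * ((n.factorial:ℝ) / t^n) * Real.exp t * Real.exp (t*k) := by
        rw [mul_add, Real.exp_add]; ring

lemma summable_master (a : ℝ) (ha : 0 < a) (n : ℕ) :
    Summable (fun k : ℕ => a^k * ((k:ℝ)+a)^n / (k.factorial : ℝ)) := by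
  refine Summable.of_nonneg_of_le (fun k => by positivity) (fun k => ?_)
    ((Real.summable_pow_div_factorial (a * Real.exp 1)).mul_left
      ((a+1)^n * (n.factorial:ℝ) * Real.exp 1))
  ·
    have hb := weight_le a 1 ha.le one_pos n k
    have hfac : (0:ℝ) < k.factorial := by exact_mod_cast Nat.factorial_pos k
    rw [div_le_iff₀ hfac]
    have hexp : Real.exp (1*(k:ℝ)) = (Real.exp 1)^k := by
      rw [one_mul, ← Real.exp_nat_mul, mul_one]
    calc a^k * ((k:ℝ)+a)^n ≤ a^k * ((a+1)^n * ((n.factorial:ℝ)/1^n) * Real.exp 1 * Real.exp (1*k)) := by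
          apply mul_le_mul_of_nonneg_left hb (by positivity)
      _ = ((a+1)^n * (n.factorial:ℝ) * Real.exp 1) * (a^k * (Real.exp 1)^k) := by
          rw [hexp]; ring
      _ = ((a+1)^n * (n.factorial:ℝ) * Real.exp 1) * ((a*Real.exp 1)^k / (k.factorial:ℝ)) * k.factorial := by
          rw [mul_pow]; field_simp

lemma summable_of_bound (a : ℝ) (ha : 0 < a) (n : ℕ) (B : ℝ) (F : ℕ → ℂ)
    (hF : ∀ k, ‖F k‖ ≤ B * (a^k * ((k:ℝ)+a)^n / (k.factorial : ℝ))) : Summable F := by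
  apply Summable.of_norm
  apply Summable.of_nonneg_of_le (fun k => norm_nonneg _) hF
  exact (summable_master a ha n).mul_left B

lemma ch_bound_aux (a : ℝ) (ha : 0 < a) (n k : ℕ) :
    ‖∑ m ∈ range (n+1), (n.choose m : ℂ) * (-(a:ℂ))^m * ff (k:ℂ) (n - m)‖
      ≤ ((k:ℝ)+a)^n := by
  calc ‖∑ m ∈ range (n+1), (n.choose m : ℂ) * (-(a:ℂ))^m * ff (k:ℂ) (n - m)‖
      ≤ ∑ m ∈ range (n+1), ‖(n.choose m : ℂ) * (-(a:ℂ))^m * ff (k:ℂ) (n - m)‖ :=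
        norm_sum_le _ _
    _ ≤ ∑ m ∈ range (n+1), (n.choose m : ℝ) * a^m * (k:ℝ)^(n-m) := by
        apply Finset.sum_le_sum
        intro m hm
        rw [norm_mul, norm_mul, norm_pow]
        have h1 : ‖((n.choose m : ℕ) : ℂ)‖ = (n.choose m : ℝ) := by
          simp
        have h2 : ‖(-(a:ℂ))‖ = a := by
          rw [norm_neg]; simp [abs_of_pos ha]
        rw [h1, h2]
        apply mul_le_mul_of_nonneg_left (ff_nat_le k (n-m)) (by positivity)
    _ = ((k:ℝ)+a)^n := by
        rw [add_comm (k:ℝ) a, add_pow]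
        apply Finset.sum_congr rfl
        intro m hm
        ring
lemma fact_prod_Ico : ∀ (n c : ℕ), c ≤ n → c.factorial * ∏ i ∈ Ico c n, (i+1) = n.factorial := by
  intro n
  induction n with
  | zero => intro c hc; interval_cases c; simp
  | succ n ih =>
    intro c hc
    rcases Nat.lt_or_ge c (n+1) with h | h
    · have hcn : c ≤ n := by omega
      rw [Finset.prod_Ico_succ_top hcn, ← mul_assoc, ih c hcn, Nat.factorial_succ]
      ring
    · have : c = n+1 := by omega
      subst this
      simp

lemma prod_sub_one_bound (s : Finset ℕ) (w : ℕ → ℂ) (ε : ℝ) (hε : 0 ≤ ε)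
    (hw : ∀ i ∈ s, ‖w i - 1‖ ≤ ε) : ‖(∏ i ∈ s, w i) - 1‖ ≤ (1+ε)^(s.card) - 1 := by
  induction s using Finset.cons_induction with
  | empty => simp
  | cons a s ha ih =>
    have hws : ∀ i ∈ s, ‖w i - 1‖ ≤ ε := fun i hi => hw i (Finset.mem_cons_of_mem hi)
    have iha := ih hws
    have hwa : ‖w a - 1‖ ≤ ε := hw a (Finset.mem_cons_self a s)
    have hwan : ‖w a‖ ≤ 1 + ε := by
      calc ‖w a‖ = ‖(w a - 1) + 1‖ := by ring_nf
        _ ≤ ‖w a - 1‖ + ‖(1:ℂ)‖ := norm_add_le _ _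
        _ = ‖w a - 1‖ + 1 := by rw [norm_one]
        _ ≤ ε + 1 := by linarith
        _ = 1 + ε := by ring
    rw [Finset.prod_cons, Finset.card_cons]
    have key : w a * (∏ i ∈ s, w i) - 1 = w a * ((∏ i ∈ s, w i) - 1) + (w a - 1) := by ring
    rw [key]
    have hprodpos : (1:ℝ) ≤ (1+ε)^s.card := one_le_pow₀ (by linarith)
    calc ‖w a * ((∏ i ∈ s, w i) - 1) + (w a - 1)‖
        ≤ ‖w a‖ * ‖(∏ i ∈ s, w i) - 1‖ + ‖w a - 1‖ := by
          refine le_trans (norm_add_le _ _) ?_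
          rw [norm_mul]
      _ ≤ (1+ε) * ((1+ε)^s.card - 1) + ε := by
          have h1 : ‖w a‖ * ‖(∏ i ∈ s, w i) - 1‖ ≤ (1+ε) * ((1+ε)^s.card - 1) :=
            mul_le_mul hwan iha (norm_nonneg _) (by linarith)
          linarith
      _ = (1+ε)^(s.card + 1) - 1 := by ring
lemma pt_eq (a : ℝ) (z : ℂ) (hzi : ∀ i : ℕ, z - (i:ℂ) ≠ 0) (n m : ℕ) (hm : m ≤ n) :
    (n.choose m : ℂ) * (-(a:ℂ))^m * ff z (n-m)
      = ff z n * ((a:ℂ)^m / (m.factorial:ℂ)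
          * ∏ i ∈ Ico (n-m) n, (((i:ℕ):ℂ)+1)/((i:ℂ) - z)) := by
  have hsplit : ff z n = ff z (n-m) * ∏ i ∈ Ico (n-m) n, (z - i) := by
    rw [ff, ff, Finset.range_eq_Ico, Finset.range_eq_Ico]
    exact (Finset.prod_Ico_consecutive (fun i : ℕ => z - (i:ℂ)) (Nat.zero_le (n-m)) (Nat.sub_le n m)).symm
  have hcard : (Ico (n-m) n).card = m := by rw [Nat.card_Ico]; omega
  have hQne' : (∏ i ∈ Ico (n-m) n, (z - (i:ℂ))) ≠ 0 := by
    apply Finset.prod_ne_zero_iff.2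
    intro i _
    exact hzi i
  have hneg : ∏ i ∈ Ico (n-m) n, ((i:ℂ) - z) = (-1)^m * ∏ i ∈ Ico (n-m) n, (z - i) := by
    calc ∏ i ∈ Ico (n-m) n, ((i:ℂ) - z) = ∏ i ∈ Ico (n-m) n, ((-1) * (z - (i:ℂ))) :=
          Finset.prod_congr rfl (fun i _ => by ring)
      _ = (∏ _i ∈ Ico (n-m) n, (-1:ℂ)) * ∏ i ∈ Ico (n-m) n, (z - (i:ℂ)) :=
          Finset.prod_mul_distrib
      _ = (-1)^m * ∏ i ∈ Ico (n-m) n, (z - (i:ℂ)) := by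
          rw [Finset.prod_const, hcard]
  have hfacm : (m.factorial : ℂ) ≠ 0 := by exact_mod_cast Nat.factorial_ne_zero m
  have hfacnm : ((n-m).factorial : ℂ) ≠ 0 := by exact_mod_cast Nat.factorial_ne_zero (n-m)
  have hP1 : ((n-m).factorial : ℂ) * (∏ i ∈ Ico (n-m) n, (((i:ℕ):ℂ)+1)) = (n.factorial : ℂ) := by
    have := fact_prod_Ico n (n-m) (Nat.sub_le n m)
    calc ((n-m).factorial : ℂ) * (∏ i ∈ Ico (n-m) n, (((i:ℕ):ℂ)+1))
        = (((n-m).factorial * ∏ i ∈ Ico (n-m) n, (i+1) : ℕ) : ℂ) := by push_cast; ring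
      _ = (n.factorial : ℂ) := by rw [this]
  have hch : ((n.choose m : ℕ) : ℂ) * (m.factorial:ℂ) * ((n-m).factorial:ℂ) = (n.factorial:ℂ) := by
    exact_mod_cast congrArg (fun t : ℕ => (t:ℂ)) (Nat.choose_mul_factorial_mul_factorial hm)
  have hCP : ((n.choose m : ℕ) : ℂ) * (m.factorial:ℂ) = ∏ i ∈ Ico (n-m) n, (((i:ℕ):ℂ)+1) := by
    apply mul_right_cancel₀ hfacnm
    linear_combination hch - hP1
  have hna : (-(a:ℂ))^m = (-1:ℂ)^m * (a:ℂ)^m := by rw [neg_pow]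
  have hs : ((-1:ℂ))^m * ((-1:ℂ))^m = 1 := by rw [← mul_pow]; norm_num
  rw [hsplit, Finset.prod_div_distrib, hneg, ← hCP, hna]
  field_simp
  ring_nf
  linear_combination (((n.choose m : ℕ) : ℂ) * (a:ℂ)^m * ff z (n-m))
    * hs
lemma exp_tsum_real (x : ℝ) : ∑' m : ℕ, x^m / (m.factorial : ℝ) = Real.exp x := by
  rw [Real.exp_eq_exp_ℝ, NormedSpace.exp_eq_tsum_div]

lemma sum_exp_le (x : ℝ) (hx : 0 ≤ x) (M : ℕ) :
    ∑ m ∈ range M, x^m / (m.factorial : ℝ) ≤ Real.exp x := by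
  rw [← exp_tsum_real]
  exact Summable.sum_le_tsum _ (fun m _ => by positivity) (Real.summable_pow_div_factorial x)

lemma sqrt_tendsto : Tendsto (fun n : ℕ => Nat.sqrt n) atTop atTop := by
  apply tendsto_atTop_atTop.2
  intro b
  exact ⟨b*b, fun n hn => Nat.le_sqrt.2 hn⟩

lemma tail_le (x : ℝ) (hx : 0 ≤ x) (M n : ℕ) :
    ∑ m ∈ Ico M n, x^m / (m.factorial:ℝ) ≤ ∑' k : ℕ, x^(k+M)/((k+M).factorial:ℝ) := by
  rw [Finset.sum_Ico_eq_sum_range]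
  have hsummable : Summable (fun k : ℕ => x^(k+M)/((k+M).factorial:ℝ)) :=
    ((Real.summable_pow_div_factorial x).comp_injective (add_left_injective M))
  calc ∑ k ∈ range (n - M), x^(M+k)/((M+k).factorial:ℝ)
      = ∑ k ∈ range (n - M), x^(k+M)/((k+M).factorial:ℝ) := by
        apply Finset.sum_congr rfl; intro k _; rw [add_comm M k]
    _ ≤ ∑' k : ℕ, x^(k+M)/((k+M).factorial:ℝ) :=
        Summable.sum_le_tsum _ (fun k _ => by positivity) hsummable

set_option maxHeartbeats 1000000 in
lemma ch_lower (a : ℝ) (ha : 0 < a) (Ch : ℕ → ℂ → ℂ) (z : ℂ)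
    (hform : ∀ n, Ch n z = ∑ m ∈ range (n+1), (n.choose m : ℂ) * (-(a:ℂ))^m * ff z (n-m))
    (hzi : ∀ i : ℕ, z - (i:ℂ) ≠ 0)
    (d : ℝ) (hd : 0 < d) (hdk : ∀ k : ℕ, d ≤ ‖z - (k:ℂ)‖) :
    ∃ (N K : ℕ), ∀ n, N ≤ n → K ≤ n ∧ d^K * ((n-K).factorial : ℝ)/2 ≤ ‖Ch n z‖ := by
  set R : ℝ := ‖z‖ with hR
  have hR0 : 0 ≤ R := norm_nonneg z
  set K : ℕ := ⌈R⌉₊ + 1 with hK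
  have hKR : R + 1 ≤ (K:ℝ) := by
    have := Nat.le_ceil R
    push_cast [hK]
    linarith
  set J : ℕ := ⌈2*R+1⌉₊ with hJdef
  have hJR : 2*R+1 ≤ (J:ℝ) := Nat.le_ceil _
  set κ : ℝ := max 3 ((J:ℝ)/d) with hκdef
  have hκ3 : (3:ℝ) ≤ κ := le_max_left _ _
  have hκ1 : (1:ℝ) ≤ κ := by linarith
  set wf : ℕ → ℂ := fun i => (((i:ℕ):ℂ)+1)/((i:ℂ) - z) with hwf
  have hiz : ∀ i : ℕ, (i:ℂ) - z ≠ 0 := by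
    intro i h
    exact hzi i (by linear_combination -h)
  have hzipos : ∀ i : ℕ, 0 < ‖z - (i:ℂ)‖ := fun i => lt_of_lt_of_le hd (hdk i)
  have hnormiz : ∀ i : ℕ, ‖(i:ℂ) - z‖ = ‖z - (i:ℂ)‖ := fun i => norm_sub_rev _ _
  have hwnorm : ∀ i : ℕ, ‖wf i‖ = ((i:ℝ)+1)/‖z - (i:ℂ)‖ := by
    intro i
    rw [hwf]
    simp only [norm_div]
    rw [hnormiz]
    congr 1
    have : ((i:ℕ):ℂ)+1 = (((i+1:ℕ)):ℂ) := by push_cast; ring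
    rw [this, Complex.norm_natCast]
    push_cast; ring
  have hzlow : ∀ i : ℕ, (i:ℝ) - R ≤ ‖z - (i:ℂ)‖ := by
    intro i
    rw [← hnormiz]
    calc (i:ℝ) - R = ‖(i:ℂ)‖ - ‖z‖ := by rw [Complex.norm_natCast, hR]
      _ ≤ ‖(i:ℂ) - z‖ := norm_sub_norm_le _ _
  have hw3 : ∀ i : ℕ, 2*R+1 ≤ (i:ℝ) → ‖wf i‖ ≤ 3 := by
    intro i hi
    rw [hwnorm i, div_le_iff₀ (hzipos i)]
    nlinarith [hzlow i, hzipos i]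
  have hwκ : ∀ i : ℕ, (i:ℕ) < J → ‖wf i‖ ≤ κ := by
    intro i hi
    rw [hwnorm i]
    calc ((i:ℝ)+1)/‖z - (i:ℂ)‖ ≤ ((i:ℝ)+1)/d :=
          div_le_div_of_nonneg_left (by positivity) hd (hdk i)
      _ ≤ (J:ℝ)/d := by
          gcongr
          have : i+1 ≤ J := hi
          exact_mod_cast this
      _ ≤ κ := le_max_right _ _
  have hwsub : ∀ i : ℕ, R < (i:ℝ) → ‖wf i - 1‖ ≤ (1+R)/((i:ℝ)-R) := by
    intro i hi
    have h1 : wf i - 1 = (1+z)/((i:ℂ) - z) := by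
      show (((i:ℕ):ℂ)+1)/((i:ℂ) - z) - 1 = (1+z)/((i:ℂ) - z)
      rw [div_sub_one (hiz i)]
      congr 1
      ring
    rw [h1, norm_div, hnormiz]
    have h2 : ‖1+z‖ ≤ 1 + R := by
      calc ‖1+z‖ ≤ ‖(1:ℂ)‖ + ‖z‖ := norm_add_le _ _
        _ = 1 + R := by rw [norm_one, hR]
    exact div_le_div₀ (by linarith) h2 (by linarith) (hzlow i)
  -- product norm bound (WB1)
  have hWnorm1 : ∀ n m : ℕ, m ≤ n → ‖∏ i ∈ Ico (n-m) n, wf i‖ ≤ κ^J * 3^m := by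
    intro n m hm
    rw [norm_prod]
    rw [← Finset.prod_filter_mul_prod_filter_not (Ico (n-m) n) (fun i => i < J)
      (fun i => ‖wf i‖)]
    have hc1 : ((Ico (n-m) n).filter (fun i => i < J)).card ≤ J := by
      calc ((Ico (n-m) n).filter (fun i => i < J)).card ≤ (range J).card := by
            apply Finset.card_le_card
            intro i hi
            exact mem_range.2 (mem_filter.1 hi).2
        _ = J := Finset.card_range J
    have hc2 : ((Ico (n-m) n).filter (fun i => ¬ i < J)).card ≤ m := by
      calc ((Ico (n-m) n).filter (fun i => ¬ i < J)).card ≤ (Ico (n-m) n).card :=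
            Finset.card_filter_le _ _
        _ = m := by rw [Nat.card_Ico]; omega
    have h1 : ∏ i ∈ (Ico (n-m) n).filter (fun i => i < J), ‖wf i‖ ≤ κ^J := by
      calc ∏ i ∈ (Ico (n-m) n).filter (fun i => i < J), ‖wf i‖
          ≤ ∏ _i ∈ (Ico (n-m) n).filter (fun i => i < J), κ :=
            Finset.prod_le_prod (fun i _ => norm_nonneg _)
              (fun i hi => hwκ i (mem_filter.1 hi).2)
        _ = κ ^ ((Ico (n-m) n).filter (fun i => i < J)).card := Finset.prod_const κ
        _ ≤ κ^J := pow_le_pow_right₀ hκ1 hc1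
    have h2 : ∏ i ∈ (Ico (n-m) n).filter (fun i => ¬ i < J), ‖wf i‖ ≤ 3^m := by
      calc ∏ i ∈ (Ico (n-m) n).filter (fun i => ¬ i < J), ‖wf i‖
          ≤ ∏ _i ∈ (Ico (n-m) n).filter (fun i => ¬ i < J), (3:ℝ) := by
            apply Finset.prod_le_prod (fun i _ => norm_nonneg _)
            intro i hi
            have hJi : J ≤ i := Nat.le_of_not_lt (mem_filter.1 hi).2
            apply hw3
            calc 2*R+1 ≤ (J:ℝ) := hJR
              _ ≤ (i:ℝ) := by exact_mod_cast hJi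
        _ = (3:ℝ) ^ ((Ico (n-m) n).filter (fun i => ¬ i < J)).card := Finset.prod_const 3
        _ ≤ 3^m := pow_le_pow_right₀ (by norm_num) hc2
    exact mul_le_mul h1 h2 (Finset.prod_nonneg (fun i _ => norm_nonneg _)) (by positivity)
  -- lower bound on ‖ff z n‖
  have hfactprod : ∀ Mq : ℕ, ∏ i ∈ range Mq, (i+1) = Mq.factorial := by
    intro Mq
    have h := fact_prod_Ico Mq 0 (Nat.zero_le Mq)
    rw [Nat.factorial_zero, one_mul] at h
    rw [Finset.range_eq_Ico]
    exact h
  have hPlow : ∀ n : ℕ, K ≤ n → d^K * ((n-K).factorial : ℝ) ≤ ‖ff z n‖ := by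
    intro n hKn
    have hnp : ‖ff z n‖ = ∏ i ∈ range n, ‖z - (i:ℂ)‖ := by rw [ff, norm_prod]
    rw [hnp, Finset.range_eq_Ico,
      ← Finset.prod_Ico_consecutive (fun i => ‖z - (i:ℂ)‖) (Nat.zero_le K) hKn]
    have h1 : d^K ≤ ∏ i ∈ Ico 0 K, ‖z - (i:ℂ)‖ := by
      calc d^K = ∏ _i ∈ Ico 0 K, d := by rw [Finset.prod_const, Nat.card_Ico]; norm_num
        _ ≤ ∏ i ∈ Ico 0 K, ‖z - (i:ℂ)‖ :=
          Finset.prod_le_prod (fun i _ => hd.le) (fun i _ => hdk i)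
    have hnatprod : ∏ i ∈ Ico K n, ((i - K + 1 : ℕ) : ℝ) = ((n-K).factorial : ℝ) := by
      rw [← Nat.cast_prod]
      congr 1
      rw [Finset.prod_Ico_eq_prod_range]
      calc ∏ j ∈ range (n - K), (K + j - K + 1) = ∏ j ∈ range (n - K), (j + 1) := by
            apply Finset.prod_congr rfl
            intro j _
            omega
        _ = (n-K).factorial := hfactprod (n-K)
    have h2 : ((n-K).factorial : ℝ) ≤ ∏ i ∈ Ico K n, ‖z - (i:ℂ)‖ := by
      rw [← hnatprod]
      apply Finset.prod_le_prod (fun i _ => by positivity)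
      intro i hi
      have hKi : K ≤ i := (mem_Ico.1 hi).1
      have hcast : ((i - K + 1 : ℕ) : ℝ) = (i:ℝ) - K + 1 := by
        push_cast [Nat.cast_sub hKi]
        ring
      rw [hcast]
      have := hzlow i
      have hKc : R + 1 ≤ (K:ℝ) := hKR
      linarith
    calc d^K * ((n-K).factorial : ℝ) ≤ (∏ i ∈ Ico 0 K, ‖z - (i:ℂ)‖) * ((n-K).factorial : ℝ) := by
          apply mul_le_mul_of_nonneg_right h1 (by positivity)
      _ ≤ (∏ i ∈ Ico 0 K, ‖z - (i:ℂ)‖) * ∏ i ∈ Ico K n, ‖z - (i:ℂ)‖ := by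
          apply mul_le_mul_of_nonneg_left h2 (Finset.prod_nonneg (fun i _ => norm_nonneg _))
  -- real weights
  set rv : ℕ → ℝ := fun m => a^m / (m.factorial : ℝ) with hrv
  have hrv0 : ∀ m, 0 ≤ rv m := fun m => by rw [hrv]; positivity
  have hvnorm : ∀ m : ℕ, ‖(a:ℂ)^m / (m.factorial:ℂ)‖ = rv m := by
    intro m
    rw [norm_div, norm_pow]
    have h1 : ‖(a:ℂ)‖ = a := by
      rw [Complex.norm_real, Real.norm_eq_abs, abs_of_pos ha]
    have h2 : ‖((m.factorial : ℕ):ℂ)‖ = (m.factorial : ℝ) := Complex.norm_natCast _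
    rw [h1, h2, hrv]
  -- main per-n estimate
  have hmain : ∀ n : ℕ, K ≤ n → 1 ≤ Nat.sqrt n → ((Nat.sqrt n : ℝ) + R + 1 ≤ (n:ℝ)/2) →
      (1 - ((Real.exp (2*(1+R)/(Nat.sqrt n : ℝ)) - 1)*Real.exp a
         + κ^J * (∑' k : ℕ, (3*a)^(k+(Nat.sqrt n+1))/((k+(Nat.sqrt n+1)).factorial:ℝ))))
        * ‖ff z n‖ ≤ ‖Ch n z‖ := by
    intro n hKn hM1 hhalf
    set M := Nat.sqrt n with hM
    have hMn : M ≤ n := Nat.sqrt_le_self n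
    have hM2 : (M:ℝ)*(M:ℝ) ≤ (n:ℝ) := by exact_mod_cast Nat.sqrt_le n
    have hM1R : (1:ℝ) ≤ (M:ℝ) := by exact_mod_cast hM1
    set ε : ℝ := (1+R)/((n:ℝ) - M - R) with hε
    have hn0 : (0:ℝ) ≤ (n:ℝ) := Nat.cast_nonneg n
    have hdenom : (n:ℝ)/2 + 1 ≤ (n:ℝ) - M - R := by linarith
    have hdpos' : (0:ℝ) < (n:ℝ) - M - R := by linarith
    have hε0 : 0 ≤ ε := div_nonneg (by linarith) hdpos'.le
    set Wm : ℕ → ℂ := fun m => ∏ i ∈ Ico (n-m) n, wf i with hWm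
    have hWsub : ∀ m, m ≤ M → ‖Wm m - 1‖ ≤ (1+ε)^m - 1 := by
      intro m hmM
      have hcard : (Ico (n-m) n).card = m := by rw [Nat.card_Ico]; omega
      rw [hWm]
      have := prod_sub_one_bound (Ico (n-m) n) wf ε hε0 ?_
      · rw [hcard] at this
        exact this
      · intro i hi
        rw [mem_Ico] at hi
        have hige : (n:ℝ) - M ≤ (i:ℝ) := by
          have h1 : n - M ≤ i := by omega
          have h2 : ((n - M : ℕ):ℝ) = (n:ℝ) - M := by
            push_cast [Nat.cast_sub hMn]; ring
          calc (n:ℝ) - M = ((n - M : ℕ):ℝ) := h2.symm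
            _ ≤ (i:ℝ) := by exact_mod_cast h1
        have hiR : R < (i:ℝ) := by linarith
        calc ‖wf i - 1‖ ≤ (1+R)/((i:ℝ)-R) := hwsub i hiR
          _ ≤ ε := by
            rw [hε]
            apply div_le_div_of_nonneg_left (by linarith) (by linarith) (by linarith)
    have hdecomp : Ch n z = ff z n
        * ∑ m ∈ range (n+1), ((a:ℂ)^m/(m.factorial:ℂ) * Wm m) := by
      rw [hform n, Finset.mul_sum]
      apply Finset.sum_congr rfl
      intro m hm
      exact pt_eq a z hzi n m (Nat.lt_succ_iff.1 (mem_range.1 hm))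
    set V : ℂ := ∑ m ∈ range (M+1), (a:ℂ)^m/(m.factorial:ℂ) with hV
    set E1 : ℂ := ∑ m ∈ range (M+1), ((a:ℂ)^m/(m.factorial:ℂ)) * (Wm m - 1) with hE1def
    set E2 : ℂ := ∑ m ∈ Ico (M+1) (n+1), ((a:ℂ)^m/(m.factorial:ℂ)) * Wm m with hE2def
    have hsplitT : ∑ m ∈ range (n+1), ((a:ℂ)^m/(m.factorial:ℂ) * Wm m) = V + E1 + E2 := by
      rw [← Finset.sum_range_add_sum_Ico _ (by omega : M+1 ≤ n+1), hV, hE1def, hE2def,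
        ← Finset.sum_add_distrib]
      congr 1
      apply Finset.sum_congr rfl
      intro m _
      ring
    have hVlow : 1 ≤ ‖V‖ := by
      have hVc : V = ((∑ m ∈ range (M+1), rv m : ℝ) : ℂ) := by
        rw [hV, Complex.ofReal_sum]
        apply Finset.sum_congr rfl
        intro m _
        rw [hrv]
        push_cast
        ring
      rw [hVc, Complex.norm_real, Real.norm_eq_abs,
        abs_of_nonneg (Finset.sum_nonneg (fun m _ => hrv0 m))]
      have h0 : rv 0 ≤ ∑ m ∈ range (M+1), rv m :=
        Finset.single_le_sum (fun i _ => hrv0 i) (mem_range.2 (by omega))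
      have : rv 0 = 1 := by rw [hrv]; norm_num
      linarith
    have hexpbound : (1+ε)^M ≤ Real.exp (2*(1+R)/(M:ℝ)) := by
      have h1 : (1+ε)^M ≤ (Real.exp ε)^M := by
        apply pow_le_pow_left₀ (by linarith) ?_ M
        linarith [Real.add_one_le_exp ε]
      have h2 : (Real.exp ε)^M = Real.exp ((M:ℝ) * ε) := (Real.exp_nat_mul ε M).symm
      have h3 : (M:ℝ) * ε ≤ 2*(1+R)/(M:ℝ) := by
        rw [hε]
        have hMM : (M:ℝ)*(M:ℝ)/2 ≤ (n:ℝ) - M - R := by linarith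
        calc (M:ℝ) * ((1+R)/((n:ℝ) - M - R)) = (M:ℝ)*(1+R)/((n:ℝ) - M - R) := by ring
          _ ≤ (M:ℝ)*(1+R)/((M:ℝ)*(M:ℝ)/2) := by
              apply div_le_div_of_nonneg_left (by nlinarith) (by nlinarith) hMM
          _ = 2*(1+R)/(M:ℝ) := by
              field_simp
      calc (1+ε)^M ≤ (Real.exp ε)^M := h1
        _ = Real.exp ((M:ℝ)*ε) := h2
        _ ≤ Real.exp (2*(1+R)/(M:ℝ)) := Real.exp_le_exp.2 h3
    have hE1bound : ‖E1‖ ≤ (Real.exp (2*(1+R)/(M:ℝ)) - 1) * Real.exp a := by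
      calc ‖E1‖ ≤ ∑ m ∈ range (M+1), ‖((a:ℂ)^m/(m.factorial:ℂ)) * (Wm m - 1)‖ :=
            norm_sum_le _ _
        _ ≤ ∑ m ∈ range (M+1), rv m * ((1+ε)^M - 1) := by
            apply Finset.sum_le_sum
            intro m hm
            rw [norm_mul, hvnorm]
            apply mul_le_mul_of_nonneg_left ?_ (hrv0 m)
            have hmM : m ≤ M := Nat.lt_succ_iff.1 (mem_range.1 hm)
            calc ‖Wm m - 1‖ ≤ (1+ε)^m - 1 := hWsub m hmM
              _ ≤ (1+ε)^M - 1 := by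
                  have := pow_le_pow_right₀ (by linarith : (1:ℝ) ≤ 1+ε) hmM
                  linarith
        _ = (∑ m ∈ range (M+1), rv m) * ((1+ε)^M - 1) := by rw [← Finset.sum_mul]
        _ ≤ Real.exp a * ((1+ε)^M - 1) := by
            apply mul_le_mul_of_nonneg_right ?_ ?_
            · rw [hrv]; exact sum_exp_le a ha.le (M+1)
            · have : (1:ℝ) ≤ (1+ε)^M := one_le_pow₀ (by linarith)
              linarith
        _ ≤ Real.exp a * (Real.exp (2*(1+R)/(M:ℝ)) - 1) := by
            apply mul_le_mul_of_nonneg_left ?_ (Real.exp_nonneg a)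
            linarith
        _ = (Real.exp (2*(1+R)/(M:ℝ)) - 1) * Real.exp a := by ring
    have hE2bound : ‖E2‖ ≤ κ^J * (∑' k : ℕ, (3*a)^(k+(M+1))/((k+(M+1)).factorial:ℝ)) := by
      calc ‖E2‖ ≤ ∑ m ∈ Ico (M+1) (n+1), ‖((a:ℂ)^m/(m.factorial:ℂ)) * Wm m‖ :=
            norm_sum_le _ _
        _ ≤ ∑ m ∈ Ico (M+1) (n+1), κ^J * ((3*a)^m/(m.factorial:ℝ)) := by
            apply Finset.sum_le_sum
            intro m hm
            rw [norm_mul, hvnorm]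
            have hmn : m ≤ n := by
              have := (mem_Ico.1 hm).2
              omega
            calc rv m * ‖Wm m‖ ≤ rv m * (κ^J * 3^m) := by
                  apply mul_le_mul_of_nonneg_left (hWnorm1 n m hmn) (hrv0 m)
              _ = κ^J * ((3*a)^m/(m.factorial:ℝ)) := by
                  rw [hrv, mul_pow]
                  ring
        _ = κ^J * ∑ m ∈ Ico (M+1) (n+1), (3*a)^m/(m.factorial:ℝ) := by rw [← Finset.mul_sum]
        _ ≤ κ^J * (∑' k : ℕ, (3*a)^(k+(M+1))/((k+(M+1)).factorial:ℝ)) := by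
            apply mul_le_mul_of_nonneg_left (tail_le (3*a) (by linarith) (M+1) (n+1))
              (by positivity)
    -- combine
    have hT : V = (∑ m ∈ range (n+1), ((a:ℂ)^m/(m.factorial:ℂ) * Wm m)) - E1 - E2 := by
      rw [hsplitT]; ring
    have htri : ‖V‖ ≤ ‖∑ m ∈ range (n+1), ((a:ℂ)^m/(m.factorial:ℂ) * Wm m)‖ + ‖E1‖ + ‖E2‖ := by
      rw [hT]
      calc ‖(∑ m ∈ range (n+1), ((a:ℂ)^m/(m.factorial:ℂ) * Wm m)) - E1 - E2‖
          ≤ ‖(∑ m ∈ range (n+1), ((a:ℂ)^m/(m.factorial:ℂ) * Wm m)) - E1‖ + ‖E2‖ :=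
            norm_sub_le _ _
        _ ≤ ‖∑ m ∈ range (n+1), ((a:ℂ)^m/(m.factorial:ℂ) * Wm m)‖ + ‖E1‖ + ‖E2‖ := by
            have := norm_sub_le (∑ m ∈ range (n+1), ((a:ℂ)^m/(m.factorial:ℂ) * Wm m)) E1
            linarith
    have hTlow : 1 - ((Real.exp (2*(1+R)/(M:ℝ)) - 1)*Real.exp a
        + κ^J * (∑' k : ℕ, (3*a)^(k+(M+1))/((k+(M+1)).factorial:ℝ)))
        ≤ ‖∑ m ∈ range (n+1), ((a:ℂ)^m/(m.factorial:ℂ) * Wm m)‖ := by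
      linarith
    rw [hdecomp, norm_mul]
    calc (1 - ((Real.exp (2*(1+R)/(M:ℝ)) - 1)*Real.exp a
          + κ^J * (∑' k : ℕ, (3*a)^(k+(M+1))/((k+(M+1)).factorial:ℝ)))) * ‖ff z n‖
        ≤ ‖∑ m ∈ range (n+1), ((a:ℂ)^m/(m.factorial:ℂ) * Wm m)‖ * ‖ff z n‖ :=
          mul_le_mul_of_nonneg_right hTlow (norm_nonneg _)
      _ = ‖ff z n‖ * ‖∑ m ∈ range (n+1), ((a:ℂ)^m/(m.factorial:ℂ) * Wm m)‖ := by ring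

  -- tendsto pieces
  have hABtend : Tendsto (fun n : ℕ =>
      (Real.exp (2*(1+R)/(Nat.sqrt n:ℝ)) - 1) * Real.exp a) atTop (nhds 0) := by
    have h1 : Tendsto (fun n : ℕ => 2*(1+R)/(Nat.sqrt n:ℝ)) atTop (nhds 0) :=
      tendsto_const_nhds.div_atTop (tendsto_natCast_atTop_atTop.comp sqrt_tendsto)
    have h2 : Tendsto (fun n : ℕ => Real.exp (2*(1+R)/(Nat.sqrt n:ℝ))) atTop (nhds 1) := by
      have := (Real.continuous_exp.tendsto 0).comp h1
      simpa [Function.comp_def] using this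
    have h3 : Tendsto (fun n : ℕ => Real.exp (2*(1+R)/(Nat.sqrt n:ℝ)) - 1) atTop (nhds 0) := by
      have := h2.sub (tendsto_const_nhds (x := (1:ℝ)))
      simpa using this
    have := h3.mul_const (Real.exp a)
    simpa using this
  have hCBtend : Tendsto (fun n : ℕ => κ^J *
      (∑' k : ℕ, (3*a)^(k+(Nat.sqrt n+1))/((k+(Nat.sqrt n+1)).factorial:ℝ))) atTop (nhds 0) := by
    have htail : Tendsto (fun Mq : ℕ => ∑' k : ℕ, (3*a)^(k+Mq)/((k+Mq).factorial:ℝ))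
        atTop (nhds 0) := tendsto_sum_nat_add (fun m => (3*a)^m/(m.factorial:ℝ))
    have hsq1 : Tendsto (fun n : ℕ => Nat.sqrt n + 1) atTop atTop :=
      tendsto_atTop_mono (fun n => Nat.le_succ _) sqrt_tendsto
    have := (htail.comp hsq1).const_mul (κ^J)
    simpa using this
  have hsum0 : Tendsto (fun n : ℕ =>
      (Real.exp (2*(1+R)/(Nat.sqrt n:ℝ)) - 1) * Real.exp a
        + κ^J * (∑' k : ℕ, (3*a)^(k+(Nat.sqrt n+1))/((k+(Nat.sqrt n+1)).factorial:ℝ)))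
      atTop (nhds 0) := by
    have := hABtend.add hCBtend
    simpa using this
  have hev1 : ∀ᶠ n : ℕ in atTop,
      (Real.exp (2*(1+R)/(Nat.sqrt n:ℝ)) - 1) * Real.exp a
        + κ^J * (∑' k : ℕ, (3*a)^(k+(Nat.sqrt n+1))/((k+(Nat.sqrt n+1)).factorial:ℝ)) < 1/2 :=
    hsum0.eventually (gt_mem_nhds (by norm_num : (0:ℝ) < 1/2))
  have hev4 : ∀ᶠ n : ℕ in atTop, (Nat.sqrt n:ℝ) + R + 1 ≤ (n:ℝ)/2 := by
    have ha4 : ∀ᶠ n : ℕ in atTop, 4*Nat.sqrt n ≤ n := by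
      rw [eventually_atTop]
      refine ⟨16, fun n hn => ?_⟩
      have hs : 4 ≤ Nat.sqrt n := Nat.le_sqrt.2 (by omega)
      have h2 := Nat.sqrt_le n
      nlinarith
    have hb4 : ∀ᶠ n : ℕ in atTop, ⌈4*(R+1)⌉₊ ≤ n := eventually_ge_atTop _
    filter_upwards [ha4, hb4] with n hn1 hn2
    have c1 : 4*(Nat.sqrt n:ℝ) ≤ (n:ℝ) := by exact_mod_cast hn1
    have c2 : 4*(R+1) ≤ (n:ℝ) := le_trans (Nat.le_ceil _) (by exact_mod_cast hn2)
    linarith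
  have hall := hev1.and ((eventually_ge_atTop K).and
    ((sqrt_tendsto.eventually_ge_atTop 1).and hev4))
  obtain ⟨N, hN⟩ := eventually_atTop.1 hall
  refine ⟨N, K, fun n hn => ?_⟩
  obtain ⟨h1, h2, h3, h4⟩ := hN n hn
  refine ⟨h2, ?_⟩
  have hm := hmain n h2 h3 h4
  have hp := hPlow n h2
  have hff0 : 0 ≤ ‖ff z n‖ := norm_nonneg _
  calc d^K * ((n-K).factorial : ℝ)/2 = (1/2) * (d^K * ((n-K).factorial : ℝ)) := by ring
    _ ≤ (1 - ((Real.exp (2*(1+R)/(Nat.sqrt n:ℝ)) - 1) * Real.exp a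
        + κ^J * (∑' k : ℕ, (3*a)^(k+(Nat.sqrt n+1))/((k+(Nat.sqrt n+1)).factorial:ℝ))))
        * ‖ff z n‖ := by
        apply mul_le_mul (by linarith) hp (by positivity) (by linarith)
    _ ≤ ‖Ch n z‖ := hm



lemma wC_norm (a : ℝ) (ha : 0 < a) (k : ℕ) : ‖wC a k‖ = a^k / (k.factorial : ℝ) := by
  rw [wC, norm_div, norm_pow]
  have h1 : ‖(a:ℂ)‖ = a := by rw [Complex.norm_real, Real.norm_eq_abs, abs_of_pos ha]
  rw [h1, Complex.norm_natCast]

lemma ident (a : ℝ) (ha : 0 < a) (Ch Cs : ℕ → ℂ → ℂ)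
    (hCh0 : ∀ x : ℂ, Ch 0 x = 1)
    (hChrec0 : ∀ x : ℂ, x * Ch 0 x = Ch 1 x + (a : ℂ) * Ch 0 x)
    (hChrec : ∀ x : ℂ, ∀ n : ℕ, x * Ch (n + 1) x =
      Ch (n + 2) x + (((n : ℂ) + 1) + (a : ℂ)) * Ch (n + 1) x +
        (a : ℂ) * ((n : ℂ) + 1) * Ch n x)
    (hCs0 : ∀ x : ℂ, Cs 0 x = 0) (hCs1 : ∀ x : ℂ, Cs 1 x = 1)
    (hCsrec : ∀ x : ℂ, ∀ n : ℕ, x * Cs (n + 1) x =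
      Cs (n + 2) x + (((n : ℂ) + 1) + (a : ℂ)) * Cs (n + 1) x +
        (a : ℂ) * ((n : ℂ) + 1) * Cs n x)
    (hform : ∀ n, ∀ x : ℂ, Ch n x
      = ∑ m ∈ range (n+1), (n.choose m : ℂ) * (-(a:ℂ))^m * ff x (n - m))
    (z : ℂ) (hzi : ∀ i : ℕ, z - (i:ℂ) ≠ 0)
    (d : ℝ) (hd : 0 < d) (hdk : ∀ k : ℕ, d ≤ ‖z - (k:ℂ)‖) :
    ∀ n, (Real.exp a : ℂ) * Cs n z
      = (∑' k : ℕ, wC a k * (1/(z - (k:ℕ)))) * Ch n z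
        - ∑' k : ℕ, wC a k * Ch n (k:ℕ) / (z - (k:ℕ)) := by
  have hbound : ∀ n k : ℕ, ‖Ch n ((k:ℕ):ℂ)‖ ≤ ((k:ℝ)+a)^n := by
    intro n k
    rw [hform n (k:ℂ)]
    exact ch_bound_aux a ha n k
  have hdinv : 0 < 1/d := by positivity
  have hsum1 : ∀ n, Summable (fun k : ℕ => wC a k * Ch n (k:ℕ) / (z - (k:ℕ))) := by
    intro n
    apply summable_of_bound a ha n (1/d)
    intro k
    rw [norm_div, norm_mul, wC_norm a ha]
    have h1 : ‖Ch n ((k:ℕ):ℂ)‖ ≤ ((k:ℝ)+a)^n := hbound n k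
    have h2 : d ≤ ‖z - ((k:ℕ):ℂ)‖ := hdk k
    have h3 : 0 < ‖z - ((k:ℕ):ℂ)‖ := lt_of_lt_of_le hd h2
    rw [div_le_iff₀ h3]
    have hb : (1/d) * (a^k * ((k:ℝ)+a)^n / (k.factorial:ℝ)) * ‖z - ((k:ℕ):ℂ)‖
        ≥ (1/d) * (a^k * ((k:ℝ)+a)^n / (k.factorial:ℝ)) * d := by
      apply mul_le_mul_of_nonneg_left h2 (by positivity)
    have hc : (1/d) * (a^k * ((k:ℝ)+a)^n / (k.factorial:ℝ)) * d
        = a^k * ((k:ℝ)+a)^n / (k.factorial:ℝ) := by field_simp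
    have hmain : a^k/(k.factorial:ℝ) * ‖Ch n ((k:ℕ):ℂ)‖
        ≤ a^k * ((k:ℝ)+a)^n / (k.factorial:ℝ) := by
      calc a^k/(k.factorial:ℝ) * ‖Ch n ((k:ℕ):ℂ)‖ ≤ a^k/(k.factorial:ℝ) * ((k:ℝ)+a)^n := by
            apply mul_le_mul_of_nonneg_left h1 (by positivity)
        _ = a^k * ((k:ℝ)+a)^n / (k.factorial:ℝ) := by ring
    calc a^k/(k.factorial:ℝ) * ‖Ch n ((k:ℕ):ℂ)‖ ≤ a^k * ((k:ℝ)+a)^n / (k.factorial:ℝ) := hmain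
      _ = (1/d) * (a^k * ((k:ℝ)+a)^n / (k.factorial:ℝ)) * d := hc.symm
      _ ≤ (1/d) * (a^k * ((k:ℝ)+a)^n / (k.factorial:ℝ)) * ‖z - ((k:ℕ):ℂ)‖ := hb
  have hsum2 : ∀ n, Summable (fun k : ℕ => wC a k * Ch n (k:ℕ)) := by
    intro n
    apply summable_of_bound a ha n 1
    intro k
    rw [norm_mul, wC_norm a ha, one_mul]
    calc a^k/(k.factorial:ℝ) * ‖Ch n ((k:ℕ):ℂ)‖ ≤ a^k/(k.factorial:ℝ) * ((k:ℝ)+a)^n := by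
          apply mul_le_mul_of_nonneg_left (hbound n k) (by positivity)
      _ = a^k * ((k:ℝ)+a)^n / (k.factorial:ℝ) := by ring
  have hS : Summable (fun k : ℕ => wC a k * (1/(z - (k:ℕ)))) := by
    apply summable_of_bound a ha 0 (1/d)
    intro k
    have h3 : 0 < ‖z - ((k:ℕ):ℂ)‖ := lt_of_lt_of_le hd (hdk k)
    rw [norm_mul, wC_norm a ha, norm_div, norm_one]
    calc a^k/(k.factorial:ℝ) * (1/‖z - ((k:ℕ):ℂ)‖)
        ≤ a^k/(k.factorial:ℝ) * (1/d) := by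
          apply mul_le_mul_of_nonneg_left ?_ (by positivity)
          apply div_le_div_of_nonneg_left zero_le_one hd (hdk k)
      _ = (1/d) * (a^k * ((k:ℝ)+a)^0 / (k.factorial:ℝ)) := by rw [pow_zero]; ring
  -- orthogonality
  have horth : ∀ n : ℕ, ∑' k : ℕ, wC a k * Ch (n+1) (k:ℕ) = 0 := by
    intro n
    have hcongr : ∀ k : ℕ, wC a k * Ch (n+1) (k:ℕ)
        = ∑ m ∈ range (n+2), ((n+1).choose m : ℂ) * (-(a:ℂ))^m * (wC a k * ff (k:ℂ) (n+1-m)) := by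
      intro k
      rw [hform (n+1) (k:ℂ), Finset.mul_sum]
      apply Finset.sum_congr rfl
      intro m _
      ring
    rw [tsum_congr hcongr]
    rw [Summable.tsum_finsetSum (fun m _ => ((mom_eq a (n+1-m)).1.mul_left _))]
    have hinner : ∀ m ∈ range (n+2),
        ∑' k : ℕ, ((n+1).choose m : ℂ) * (-(a:ℂ))^m * (wC a k * ff (k:ℂ) (n+1-m))
        = ((n+1).choose m : ℂ) * (-(a:ℂ))^m * ((a:ℂ)^(n+1-m) * (Real.exp a : ℂ)) := by
      intro m _
      rw [tsum_mul_left, (mom_eq a (n+1-m)).2]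
    rw [Finset.sum_congr rfl hinner]
    have hzero : ∑ m ∈ range (n+2), (-(a:ℂ))^m * (a:ℂ)^(n+1-m) * ((n+1).choose m : ℂ) = 0 := by
      rw [← add_pow]
      simp
    calc ∑ m ∈ range (n+2), ((n+1).choose m : ℂ) * (-(a:ℂ))^m * ((a:ℂ)^(n+1-m) * (Real.exp a:ℂ))
        = (Real.exp a : ℂ) * ∑ m ∈ range (n+2), (-(a:ℂ))^m * (a:ℂ)^(n+1-m) * ((n+1).choose m : ℂ) := by
          rw [Finset.mul_sum]
          apply Finset.sum_congr rfl
          intro m _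
          ring
      _ = 0 := by rw [hzero, mul_zero]
  -- G recurrence
  have hGrec : ∀ n : ℕ, (∑' k : ℕ, wC a k * Ch (n+2) (k:ℕ) / (z - (k:ℕ)))
      = z * (∑' k : ℕ, wC a k * Ch (n+1) (k:ℕ) / (z - (k:ℕ)))
        - (((n:ℂ)+1) + a) * (∑' k : ℕ, wC a k * Ch (n+1) (k:ℕ) / (z - (k:ℕ)))
        - (a:ℂ) * ((n:ℂ)+1) * (∑' k : ℕ, wC a k * Ch n (k:ℕ) / (z - (k:ℕ)))
        - ∑' k : ℕ, wC a k * Ch (n+1) (k:ℕ) := by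
    intro n
    have hper : ∀ k : ℕ, wC a k * Ch (n+2) (k:ℕ) / (z - (k:ℕ))
        = z * (wC a k * Ch (n+1) (k:ℕ) / (z - (k:ℕ)))
          - (((n:ℂ)+1) + a) * (wC a k * Ch (n+1) (k:ℕ) / (z - (k:ℕ)))
          - (a:ℂ) * ((n:ℂ)+1) * (wC a k * Ch n (k:ℕ) / (z - (k:ℕ)))
          - wC a k * Ch (n+1) (k:ℕ) := by
      intro k
      have hrec := hChrec ((k:ℕ):ℂ) n
      have hne := hzi k
      field_simp
      linear_combination (-(wC a k)) * hrec
    rw [tsum_congr hper]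
    rw [Summable.tsum_sub (((((hsum1 (n+1)).mul_left z).sub
        ((hsum1 (n+1)).mul_left _)).sub ((hsum1 n).mul_left _))) (hsum2 (n+1))]
    rw [Summable.tsum_sub (((hsum1 (n+1)).mul_left z).sub ((hsum1 (n+1)).mul_left _))
      ((hsum1 n).mul_left _)]
    rw [Summable.tsum_sub ((hsum1 (n+1)).mul_left z) ((hsum1 (n+1)).mul_left _)]
    rw [tsum_mul_left, tsum_mul_left, tsum_mul_left]
  -- the induction
  set S : ℂ := ∑' k : ℕ, wC a k * (1/(z - (k:ℕ))) with hSdef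
  apply two_step
  · rw [hCs0, hCh0, mul_zero]
    have hG0 : (∑' k : ℕ, wC a k * Ch 0 (k:ℕ) / (z - (k:ℕ))) = S := by
      rw [hSdef]
      apply tsum_congr
      intro k
      rw [hCh0]
      rw [mul_one, mul_one_div]
    rw [hG0]
    ring
  · rw [hCs1, mul_one]
    have hCh1 : ∀ x : ℂ, Ch 1 x = x - a := by
      intro x
      have := hChrec0 x
      rw [hCh0] at this
      linear_combination -this
    have hG1 : (∑' k : ℕ, wC a k * Ch 1 (k:ℕ) / (z - (k:ℕ))) = (z - a) * S - (Real.exp a : ℂ) := by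
      have hper : ∀ k : ℕ, wC a k * Ch 1 (k:ℕ) / (z - (k:ℕ))
          = (z - (a:ℂ)) * (wC a k * (1/(z - (k:ℕ)))) - wC a k := by
        intro k
        rw [hCh1]
        have hne := hzi k
        field_simp
        ring
      rw [tsum_congr hper]
      rw [Summable.tsum_sub (hS.mul_left _) (wC_summable a)]
      rw [tsum_mul_left, wC_tsum, ← hSdef]
    rw [hCh1, hG1]
    ring
  · intro n ih0 ih1
    have hcs : (Real.exp a : ℂ) * Cs (n+2) z
        = z * ((Real.exp a : ℂ) * Cs (n+1) z) - (((n:ℂ)+1) + a) * ((Real.exp a : ℂ) * Cs (n+1) z)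
          - (a:ℂ) * ((n:ℂ)+1) * ((Real.exp a : ℂ) * Cs n z) := by
      have := hCsrec z n
      linear_combination (-(Real.exp a : ℂ)) * this
    have hch : Ch (n+2) z = z * Ch (n+1) z - (((n:ℂ)+1) + a) * Ch (n+1) z
        - (a:ℂ) * ((n:ℂ)+1) * Ch n z := by
      have := hChrec z n
      linear_combination -this
    rw [hcs, ih0, ih1, hch, hGrec n, horth n]
    ring

end ACM

set_option maxHeartbeats 1000000 in
open ACM in
/-- **Markov's theorem for the Charlier family.** Let `Ch` be the monic Charlier polynomials
and `Cs` the associated Charlier polynomials, both satisfying the three-term recurrence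
`x·p_n = p_{n+1} + (n+a)·p_n + a·n·p_{n−1}`, with `Ĉ_{−1} = 0, Ĉ_0 = 1` for the monic
family (so the recurrence at `n = 0` reads `x·Ĉ_0 = Ĉ_1 + a·Ĉ_0`) and `C*_0 = 0, C*_1 = 1`
for the associated family (recurrence for `n ≥ 1`). Then for every complex `z ∉ [0,∞)`,
`lim_{n→∞} e^a C*_n(z;a) / Ĉ_n(z;a) = ∑_{k=0}^∞ (a^k/k!) / (z−k)`. -/
theorem assoc_charlier_markov (a : ℝ) (ha : 0 < a) (Ch Cs : ℕ → ℂ → ℂ)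
    (hCh0 : ∀ x : ℂ, Ch 0 x = 1)
    (hChrec0 : ∀ x : ℂ, x * Ch 0 x = Ch 1 x + (a : ℂ) * Ch 0 x)
    (hChrec : ∀ x : ℂ, ∀ n : ℕ, x * Ch (n + 1) x =
      Ch (n + 2) x + (((n : ℂ) + 1) + (a : ℂ)) * Ch (n + 1) x +
        (a : ℂ) * ((n : ℂ) + 1) * Ch n x)
    (hCs0 : ∀ x : ℂ, Cs 0 x = 0) (hCs1 : ∀ x : ℂ, Cs 1 x = 1)
    (hCsrec : ∀ x : ℂ, ∀ n : ℕ, x * Cs (n + 1) x =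
      Cs (n + 2) x + (((n : ℂ) + 1) + (a : ℂ)) * Cs (n + 1) x +
        (a : ℂ) * ((n : ℂ) + 1) * Cs n x)
    (z : ℂ) (hz : ∀ t : ℝ, 0 ≤ t → z ≠ (t : ℂ)) :
    Tendsto (fun n : ℕ => (Real.exp a : ℂ) * Cs n z / Ch n z) atTop
      (𝓝 (∑' k : ℕ, ((a : ℂ) ^ k / (k.factorial : ℂ)) * (1 / (z - k)))) := by
  have hzi : ∀ i : ℕ, z - (i:ℂ) ≠ 0 := by
    intro i h
    apply hz (i:ℝ) (Nat.cast_nonneg i)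
    have h2 : z = (i:ℂ) := by linear_combination h
    rw [h2]
    norm_num
  obtain ⟨d, hd, hdk⟩ : ∃ d : ℝ, 0 < d ∧ ∀ k : ℕ, d ≤ ‖z - (k:ℂ)‖ := by
    by_cases him : z.im = 0
    · have hre : z.re < 0 := by
        by_contra h
        push_neg at h
        apply hz z.re h
        apply Complex.ext
        · simp
        · simp [him]
      refine ⟨-z.re, by linarith, fun k => ?_⟩
      have h1 : |(z - (k:ℂ)).re| ≤ ‖z - (k:ℂ)‖ := Complex.abs_re_le_norm _
      have h2 : (z - (k:ℂ)).re = z.re - k := by simp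
      have h3 : -z.re ≤ -(z.re - (k:ℝ)) := by
        have : (0:ℝ) ≤ k := Nat.cast_nonneg k
        linarith
      calc -z.re ≤ -(z.re - (k:ℝ)) := h3
        _ ≤ |(z.re - (k:ℝ))| := neg_le_abs _
        _ = |(z - (k:ℂ)).re| := by rw [h2]
        _ ≤ ‖z - (k:ℂ)‖ := h1
    · refine ⟨|z.im|, abs_pos.2 him, fun k => ?_⟩
      calc |z.im| = |(z - (k:ℂ)).im| := by simp
        _ ≤ ‖z - (k:ℂ)‖ := Complex.abs_im_le_norm _
  have hform := chFormula a Ch hCh0 hChrec0 hChrec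
  obtain ⟨N, K, hlow⟩ := ch_lower a ha Ch z (fun n => hform n z) hzi d hd hdk
  have hid := ident a ha Ch Cs hCh0 hChrec0 hChrec hCs0 hCs1 hCsrec hform z hzi d hd hdk
  have hSeq : (∑' k : ℕ, ((a : ℂ) ^ k / (k.factorial : ℂ)) * (1 / (z - (k:ℕ))))
      = ∑' k : ℕ, wC a k * (1/(z - (k:ℕ))) := by
    apply tsum_congr
    intro k
    rw [wC]
  rw [hSeq]
  set S : ℂ := ∑' k : ℕ, wC a k * (1/(z - (k:ℕ))) with hSdef
  set t : ℝ := 4*(a+1) with htdef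
  have ht0 : 0 < t := by rw [htdef]; positivity
  set CG : ℝ := Real.exp t * Real.exp (a * Real.exp t) with hCGdef
  have hCG0 : 0 < CG := by rw [hCGdef]; positivity
  have hbound : ∀ n k : ℕ, ‖Ch n ((k:ℕ):ℂ)‖ ≤ ((k:ℝ)+a)^n := by
    intro n k
    rw [hform n (k:ℂ)]
    exact ch_bound_aux a ha n k
  -- norm bound on the second-kind sums
  have hGnorm : ∀ n : ℕ, ‖∑' k : ℕ, wC a k * Ch n (k:ℕ) / (z - (k:ℕ))‖
      ≤ (1/d) * (CG * ((n.factorial:ℝ) * (1/4)^n)) := by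
    intro n
    have hgsum : Summable (fun k : ℕ =>
        (1/d) * ((a+1)^n * ((n.factorial:ℝ)/t^n) * Real.exp t * ((a*Real.exp t)^k/(k.factorial:ℝ)))) := by
      apply Summable.mul_left
      apply Summable.mul_left
      exact Real.summable_pow_div_factorial _
    have hfb : ∀ k : ℕ, ‖wC a k * Ch n (k:ℕ) / (z - (k:ℕ))‖
        ≤ (1/d) * ((a+1)^n * ((n.factorial:ℝ)/t^n) * Real.exp t * ((a*Real.exp t)^k/(k.factorial:ℝ))) := by
      intro k
      have h3 : 0 < ‖z - ((k:ℕ):ℂ)‖ := lt_of_lt_of_le hd (hdk k)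
      rw [norm_div, norm_mul, wC_norm a ha]
      have hwle := weight_le a t ha.le ht0 n k
      have hexp : Real.exp (t*(k:ℝ)) = (Real.exp t)^k := by
        rw [← Real.exp_nat_mul]
        ring_nf
      calc a^k/(k.factorial:ℝ) * ‖Ch n ((k:ℕ):ℂ)‖ / ‖z - ((k:ℕ):ℂ)‖
          ≤ a^k/(k.factorial:ℝ) * ((k:ℝ)+a)^n / d := by
            apply div_le_div₀ (by positivity) ?_ hd (hdk k)
            apply mul_le_mul_of_nonneg_left (hbound n k) (by positivity)
        _ ≤ a^k/(k.factorial:ℝ) * ((a+1)^n * ((n.factorial:ℝ)/t^n) * Real.exp t * Real.exp (t*k)) / d := by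
            apply div_le_div_of_nonneg_right ?_ hd.le
            apply mul_le_mul_of_nonneg_left hwle (by positivity)
        _ = (1/d) * ((a+1)^n * ((n.factorial:ℝ)/t^n) * Real.exp t * ((a*Real.exp t)^k/(k.factorial:ℝ))) := by
            rw [hexp, mul_pow]
            field_simp
            ring
    calc ‖∑' k : ℕ, wC a k * Ch n (k:ℕ) / (z - (k:ℕ))‖
        ≤ ∑' k : ℕ, (1/d) * ((a+1)^n * ((n.factorial:ℝ)/t^n) * Real.exp t * ((a*Real.exp t)^k/(k.factorial:ℝ))) :=
          tsum_of_norm_bounded hgsum.hasSum hfb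
      _ = (1/d) * ((a+1)^n * ((n.factorial:ℝ)/t^n) * Real.exp t * Real.exp (a * Real.exp t)) := by
          rw [tsum_mul_left, tsum_mul_left, exp_tsum_real]
      _ = (1/d) * (CG * ((n.factorial:ℝ) * (1/4)^n)) := by
          have hne : ((a+1):ℝ)^n ≠ 0 := by positivity
          rw [hCGdef, show t^n = 4^n*(a+1)^n from by rw [htdef, mul_pow]]
          field_simp
          ring
          rw [← mul_pow]; norm_num

  have hfacle : ∀ n, K ≤ n → (n.factorial:ℝ) ≤ ((n-K).factorial:ℝ) * (n:ℝ)^K := by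
    intro n hKn
    have h1 := fact_prod_Ico n (n-K) (Nat.sub_le n K)
    have hcard : (Ico (n-K) n).card = K := by rw [Nat.card_Ico]; omega
    have h2 : ∏ i ∈ Ico (n-K) n, (i+1) ≤ n^K := by
      calc ∏ i ∈ Ico (n-K) n, (i+1) ≤ ∏ _i ∈ Ico (n-K) n, n := by
            apply Finset.prod_le_prod'
            intro i hi
            have := (mem_Ico.1 hi).2
            omega
        _ = n^K := by rw [Finset.prod_const, hcard]
    have h3 : ((∏ i ∈ Ico (n-K) n, (i+1) : ℕ):ℝ) ≤ ((n:ℝ))^K := by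
      calc ((∏ i ∈ Ico (n-K) n, (i+1) : ℕ):ℝ) ≤ ((n^K : ℕ):ℝ) := by exact_mod_cast h2
        _ = (n:ℝ)^K := by push_cast; ring
    calc (n.factorial:ℝ) = ((n-K).factorial:ℝ) * ((∏ i ∈ Ico (n-K) n, (i+1) : ℕ):ℝ) := by
          exact_mod_cast congrArg (fun q : ℕ => (q:ℝ)) h1.symm
      _ ≤ ((n-K).factorial:ℝ) * (n:ℝ)^K := by
          apply mul_le_mul_of_nonneg_left h3 (by positivity)
  set bnd : ℕ → ℝ := fun n => (2*CG/(d^(K+1))) * ((n:ℝ)^K * (1/4)^n) with hbnd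
  have hevbnd : ∀ᶠ n in atTop,
      ‖(∑' k : ℕ, wC a k * Ch n (k:ℕ) / (z - (k:ℕ))) / Ch n z‖ ≤ bnd n := by
    rw [eventually_atTop]
    refine ⟨N, fun n hn => ?_⟩
    obtain ⟨hKn, hlb⟩ := hlow n hn
    have hfk : (0:ℝ) < ((n-K).factorial:ℝ) := by exact_mod_cast Nat.factorial_pos (n-K)
    rw [norm_div]
    calc ‖∑' k : ℕ, wC a k * Ch n (k:ℕ) / (z - (k:ℕ))‖ / ‖Ch n z‖
        ≤ ((1/d) * (CG * (((n-K).factorial:ℝ) * (n:ℝ)^K * (1/4)^n))) / (d^K * ((n-K).factorial:ℝ)/2) := by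
          apply div_le_div₀ (by positivity) ?_ (by positivity) hlb
          calc ‖∑' k : ℕ, wC a k * Ch n (k:ℕ) / (z - (k:ℕ))‖
              ≤ (1/d) * (CG * ((n.factorial:ℝ) * (1/4)^n)) := hGnorm n
            _ ≤ (1/d) * (CG * (((n-K).factorial:ℝ) * (n:ℝ)^K * (1/4)^n)) := by
                have := hfacle n hKn
                have h14 : (0:ℝ) < (1/4:ℝ)^n := by positivity
                apply mul_le_mul_of_nonneg_left ?_ (by positivity)
                apply mul_le_mul_of_nonneg_left ?_ hCG0.le
                apply mul_le_mul_of_nonneg_right this h14.le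
      _ = bnd n := by
          rw [hbnd]
          field_simp
          ring
  have htend : Tendsto bnd atTop (nhds 0) := by
    have h1 : Tendsto (fun n : ℕ => (n:ℝ)^K * (1/4)^n) atTop (nhds 0) :=
      tendsto_pow_const_mul_const_pow_of_lt_one K (by norm_num) (by norm_num)
    have := h1.const_mul (2*CG/(d^(K+1)))
    simpa [hbnd] using this
  have hsq : Tendsto (fun n : ℕ => (∑' k : ℕ, wC a k * Ch n (k:ℕ) / (z - (k:ℕ))) / Ch n z)
      atTop (nhds 0) := squeeze_zero_norm' hevbnd htend
  have hmain : Tendsto (fun n : ℕ =>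
      S - (∑' k : ℕ, wC a k * Ch n (k:ℕ) / (z - (k:ℕ))) / Ch n z) atTop (nhds S) := by
    have := (tendsto_const_nhds (x := S) (f := atTop)).sub hsq
    simpa using this
  apply hmain.congr'
  rw [EventuallyEq, eventually_atTop]
  refine ⟨N, fun n hn => ?_⟩
  obtain ⟨hKn, hlb⟩ := hlow n hn
  have hfk : (0:ℝ) < ((n-K).factorial:ℝ) := by exact_mod_cast Nat.factorial_pos (n-K)
  have hne : Ch n z ≠ 0 := by
    intro h0
    rw [h0, norm_zero] at hlb
    nlinarith [pow_pos hd K]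
  rw [hid n, sub_div, mul_div_cancel_right₀ _ hne]
end

section
/- Let a > 0 be real and let C*_n(x;a) be the associated Charlier polynomials, defined by the recurrence x·C*_n = C*_{n+1} + (n+a)·C*_n + a·n·C*_{n−1} with C*_0 = 0, C*_1 = 1. Then for every complex number x, lim_{n→∞} (−1)^n · C*_n(x;a)/Γ(n−x) = −e^a · ∑_{k=0}^∞ (−a)^k/Γ(1−x+k), where each term 1/Γ(1−x+k) is interpreted as 0 when 1−x+k is a nonpositive integer. -/
open Filter Topology Finset

namespace AssocCharlierMH

noncomputable def vt (a : ℝ) (x : ℂ) (n m : ℕ) : ℂ :=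
  (-1) ^ m * (a : ℂ) ^ (n + m) * ((n + m).factorial : ℂ) * ((m.factorial : ℂ))⁻¹ *
    (Complex.Gamma ((n : ℂ) + (m : ℂ) + 1 - x))⁻¹

lemma invGamma (z : ℂ) : (Complex.Gamma z)⁻¹ = z * (Complex.Gamma (z + 1))⁻¹ := by
  by_cases hz : z = 0
  · simp [hz, Complex.Gamma_zero]
  · rw [Complex.Gamma_add_one z hz, mul_inv, ← mul_assoc, mul_inv_cancel₀ hz, one_mul]

lemma inv_factorial_succ (m : ℕ) :
    ((m.factorial : ℂ))⁻¹ = ((m : ℂ) + 1) * (((m + 1).factorial : ℂ))⁻¹ := by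
  have hm : (m.factorial : ℂ) ≠ 0 := Nat.cast_ne_zero.mpr m.factorial_ne_zero
  have hm1 : ((m : ℂ) + 1) ≠ 0 := by exact_mod_cast Nat.succ_ne_zero m
  rw [Nat.factorial_succ]
  push_cast
  field_simp

lemma vt_succ (a : ℝ) (x : ℂ) (n m : ℕ) :
    ((m : ℂ) + 1) * ((n : ℂ) + (m : ℂ) + 1 - x) * vt a x n (m + 1) =
      -(a : ℂ) * ((n : ℂ) + (m : ℂ) + 1) * vt a x n m := by
  simp only [vt]
  rw [invGamma ((n : ℂ) + (m : ℂ) + 1 - x),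
    show (n : ℂ) + (m : ℂ) + 1 - x + 1 = (n : ℂ) + ((m : ℕ) + 1 : ℕ) + 1 - x from by
      push_cast; ring]
  simp only [show n + (m + 1) = (n + m) + 1 from by omega, Nat.factorial_succ (n + m)]
  rw [inv_factorial_succ m]
  push_cast
  ring

lemma vt_rec (a : ℝ) (x : ℂ) (n m : ℕ) :
    vt a x (n + 2) m - ((n : ℂ) + 1 - x) * vt a x (n + 1) (m + 1) =
      (a : ℂ) * vt a x (n + 1) m - (a : ℂ) * ((n : ℂ) + 1) * vt a x n (m + 1) := by
  simp only [vt]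
  rw [show (((n + 2 : ℕ) : ℂ)) + (m : ℂ) + 1 - x = ((n : ℂ) + (m : ℂ) + 2 - x) + 1 from by
        push_cast; ring,
      show (((n + 1 : ℕ) : ℂ)) + (((m + 1 : ℕ)) : ℂ) + 1 - x = ((n : ℂ) + (m : ℂ) + 2 - x) + 1 from by
        push_cast; ring,
      show (((n + 1 : ℕ) : ℂ)) + (m : ℂ) + 1 - x = (n : ℂ) + (m : ℂ) + 2 - x from by
        push_cast; ring,
      show ((n : ℂ)) + (((m + 1 : ℕ)) : ℂ) + 1 - x = (n : ℂ) + (m : ℂ) + 2 - x from by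
        push_cast; ring,
      invGamma ((n : ℂ) + (m : ℂ) + 2 - x)]
  simp only [show n + 2 + m = (n + m + 1) + 1 from by omega,
      show n + 1 + (m + 1) = (n + m + 1) + 1 from by omega,
      show n + 1 + m = n + m + 1 from by omega,
      show n + (m + 1) = n + m + 1 from by omega,
      Nat.factorial_succ (n + m + 1)]
  rw [inv_factorial_succ m]
  push_cast
  ring

lemma vt_bdry (a : ℝ) (x : ℂ) (n : ℕ) :
    ((n : ℂ) + 1 - x) * vt a x (n + 1) 0 = (a : ℂ) * ((n : ℂ) + 1) * vt a x n 0 := by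
  simp only [vt]
  rw [show (((n + 1 : ℕ) : ℂ)) + ((0 : ℕ) : ℂ) + 1 - x = ((n : ℂ) + ((0:ℕ) : ℂ) + 1 - x) + 1 from by
        push_cast; ring,
      invGamma ((n : ℂ) + ((0:ℕ) : ℂ) + 1 - x),
      show n + 1 + 0 = (n + 0) + 1 from by omega, Nat.factorial_succ (n + 0)]
  push_cast
  ring


-- helper norms
lemma norm_nat_add_one (m : ℕ) : ‖((m : ℂ) + 1)‖ = (m : ℝ) + 1 := by
  rw [show ((m : ℂ) + 1) = (((m + 1 : ℕ)) : ℂ) from by push_cast; ring, Complex.norm_natCast]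
  push_cast; ring

lemma norm_nat_add_nat_one (n m : ℕ) : ‖((n : ℂ) + (m : ℂ) + 1)‖ = (n : ℝ) + m + 1 := by
  rw [show ((n : ℂ) + (m : ℂ) + 1) = (((n + m + 1 : ℕ)) : ℂ) from by push_cast; ring,
    Complex.norm_natCast]
  push_cast; ring

lemma norm_shift_lb (n m : ℕ) (x : ℂ) :
    (n : ℝ) + m + 1 - ‖x‖ ≤ ‖((n : ℂ) + (m : ℂ) + 1 - x)‖ := by
  have h := norm_sub_norm_le ((n : ℂ) + (m : ℂ) + 1) x
  rw [norm_nat_add_nat_one] at h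
  linarith

lemma vt_summable (a : ℝ) (ha : 0 < a) (x : ℂ) (n : ℕ) : Summable (vt a x n) := by
  apply summable_of_ratio_norm_eventually_le (r := 1/2) (by norm_num)
  filter_upwards [eventually_ge_atTop (⌈2 * ‖x‖ + 4 * a + 4⌉₊)] with m hm
  have hm' : 2 * ‖x‖ + 4 * a + 4 ≤ (m : ℝ) := by
    calc 2 * ‖x‖ + 4 * a + 4 ≤ (⌈2 * ‖x‖ + 4 * a + 4⌉₊ : ℝ) := Nat.le_ceil _
    _ ≤ (m : ℝ) := by exact_mod_cast hm
  have hxpos : 0 ≤ ‖x‖ := norm_nonneg x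
  have hE := congrArg norm (vt_succ a x n m)
  rw [norm_mul, norm_mul, norm_mul, norm_mul, norm_neg, Complex.norm_real,
    Real.norm_eq_abs, abs_of_pos ha, norm_nat_add_one, norm_nat_add_nat_one] at hE
  set R := ‖((n : ℂ) + (m : ℂ) + 1 - x)‖ with hR
  have hRlb : (n : ℝ) + m + 1 - ‖x‖ ≤ R := norm_shift_lb n m x
  have hRpos : 0 < R := by nlinarith
  have hY : (0:ℝ) ≤ ‖vt a x n m‖ := norm_nonneg _
  have hkey : 2 * (a * ((n : ℝ) + m + 1)) ≤ ((m : ℝ) + 1) * R := by nlinarith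
  have hmR : 0 < ((m : ℝ) + 1) * R := by positivity
  rw [← mul_le_mul_iff_of_pos_right hmR]
  nlinarith [mul_le_mul_of_nonneg_right hkey hY, hE]

noncomputable def vv (a : ℝ) (x : ℂ) (n : ℕ) : ℂ := ∑' m, vt a x n m

lemma vv_rec (a : ℝ) (ha : 0 < a) (x : ℂ) (n : ℕ) :
    vv a x (n + 2) = ((n : ℂ) + 1 + a - x) * vv a x (n + 1) - (a : ℂ) * ((n : ℂ) + 1) * vv a x n := by
  have hS : ∀ k, Summable (vt a x k) := vt_summable a ha x
  have hS1 : ∀ k, Summable (fun m => vt a x k (m + 1)) := fun k => (summable_nat_add_iff 1).2 (hS k)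
  have key : vv a x (n + 2) - ((n : ℂ) + 1 - x) * vv a x (n + 1)
      = (a : ℂ) * vv a x (n + 1) - (a : ℂ) * ((n : ℂ) + 1) * vv a x n := by
    have L : vv a x (n + 2) - ((n : ℂ) + 1 - x) * vv a x (n + 1)
        = -(((n : ℂ) + 1 - x) * vt a x (n + 1) 0)
          + ∑' m, (vt a x (n + 2) m - ((n : ℂ) + 1 - x) * vt a x (n + 1) (m + 1)) := by
      rw [vv, vv, Summable.tsum_eq_zero_add (hS (n + 1)),
        Summable.tsum_sub (hS (n + 2)) ((hS1 (n + 1)).mul_left _), tsum_mul_left]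
      ring
    have R : (a : ℂ) * vv a x (n + 1) - (a : ℂ) * ((n : ℂ) + 1) * vv a x n
        = -((a : ℂ) * ((n : ℂ) + 1) * vt a x n 0)
          + ∑' m, ((a : ℂ) * vt a x (n + 1) m - (a : ℂ) * ((n : ℂ) + 1) * vt a x n (m + 1)) := by
      rw [vv, vv, Summable.tsum_eq_zero_add (hS n),
        Summable.tsum_sub ((hS (n + 1)).mul_left _) ((hS1 n).mul_left _), tsum_mul_left, tsum_mul_left]
      ring
    rw [L, R, vt_bdry a x n]
    congr 1
    exact tsum_congr (fun m => vt_rec a x n m)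
  linear_combination key


noncomputable def gt' (a : ℝ) (x : ℂ) (n m : ℕ) : ℂ :=
  Complex.Gamma ((n : ℂ) + 1 - x) * vt a x n m * (((a : ℂ) ^ n * (n.factorial : ℂ)))⁻¹

noncomputable def pt (a : ℝ) (x : ℂ) (n m : ℕ) : ℂ :=
  (-(a : ℂ)) ^ m *
    ∏ j ∈ range m, (((n : ℂ) + (j : ℂ) + 1) / (((j : ℂ) + 1) * ((n : ℂ) + (j : ℂ) + 1 - x)))

lemma re_pos_ne_zero (n m : ℕ) (x : ℂ) (h : x.re < n + 1) :
    ((n : ℂ) + (m : ℂ) + 1 - x) ≠ 0 := by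
  intro h0
  have : ((n : ℂ) + (m : ℂ) + 1 - x).re = 0 := by rw [h0]; simp
  simp only [Complex.sub_re, Complex.add_re, Complex.natCast_re, Complex.one_re] at this
  have hm : (0:ℝ) ≤ m := Nat.cast_nonneg m
  linarith

lemma gamma_arg_ne (n : ℕ) (x : ℂ) (h : x.re < n + 1) : Complex.Gamma ((n : ℂ) + 1 - x) ≠ 0 := by
  apply Complex.Gamma_ne_zero_of_re_pos
  simp only [Complex.sub_re, Complex.add_re, Complex.natCast_re, Complex.one_re]
  linarith

lemma gt_eq_pt (a : ℝ) (ha : 0 < a) (x : ℂ) (n : ℕ) (hn : x.re < n + 1) (m : ℕ) :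
    gt' a x n m = pt a x n m := by
  have hane : (a : ℂ) ≠ 0 := by exact_mod_cast ha.ne'
  have hfa : ((n.factorial : ℂ)) ≠ 0 := Nat.cast_ne_zero.mpr n.factorial_ne_zero
  induction m with
  | zero =>
    simp only [gt', pt, vt, pow_zero, range_zero, prod_empty, Nat.add_zero, Nat.cast_zero,
      Nat.factorial_zero, Nat.cast_one, add_zero, one_mul, mul_one, inv_one]
    have h1 : Complex.Gamma ((n : ℂ) + 1 - x) ≠ 0 := gamma_arg_ne n x hn
    field_simp
  | succ m ih =>
    have hm1 : ((m : ℂ) + 1) ≠ 0 := by exact_mod_cast Nat.succ_ne_zero m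
    have hz : ((n : ℂ) + (m : ℂ) + 1 - x) ≠ 0 := re_pos_ne_zero n m x hn
    have hv : vt a x n (m + 1)
        = (-(a : ℂ) * ((n : ℂ) + (m : ℂ) + 1)) / (((m : ℂ) + 1) * ((n : ℂ) + (m : ℂ) + 1 - x))
            * vt a x n m := by
      rw [div_mul_eq_mul_div, eq_div_iff (mul_ne_zero hm1 hz)]
      linear_combination vt_succ a x n m
    have hgt : gt' a x n (m + 1)
        = (-(a : ℂ) * ((n : ℂ) + (m : ℂ) + 1)) / (((m : ℂ) + 1) * ((n : ℂ) + (m : ℂ) + 1 - x))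
            * gt' a x n m := by
      simp only [gt', hv]; ring
    rw [hgt, ih, pt, pt, prod_range_succ, pow_succ]
    ring

lemma tendsto_inv_nat_add (d : ℂ) :
    Tendsto (fun n : ℕ => ((n : ℂ) + d)⁻¹) atTop (𝓝 0) := by
  have h1 : Tendsto (fun n : ℕ => ((n : ℝ) - ‖d‖)⁻¹) atTop (𝓝 0) := by
    apply tendsto_inv_atTop_zero.comp
    exact tendsto_atTop_add_const_right _ _ tendsto_natCast_atTop_atTop
  apply squeeze_zero_norm' _ h1
  filter_upwards [eventually_ge_atTop (⌈‖d‖ + 1⌉₊)] with n hn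
  have hn' : ‖d‖ + 1 ≤ (n : ℝ) := by
    calc ‖d‖ + 1 ≤ (⌈‖d‖ + 1⌉₊ : ℝ) := Nat.le_ceil _
    _ ≤ (n : ℝ) := by exact_mod_cast hn
  have hlb : (n : ℝ) - ‖d‖ ≤ ‖(n : ℂ) + d‖ := by
    have h := norm_sub_norm_le ((n : ℂ)) (-d)
    simpa [sub_neg_eq_add] using h
  rw [norm_inv]
  exact inv_anti₀ (by linarith) hlb

lemma tendsto_ratio (c d : ℂ) :
    Tendsto (fun n : ℕ => ((n : ℂ) + c) * (((n : ℂ) + d)⁻¹)) atTop (𝓝 1) := by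
  have h0 : Tendsto (fun n : ℕ => 1 + (c - d) * ((n : ℂ) + d)⁻¹) atTop (𝓝 1) := by
    have := (tendsto_inv_nat_add d).const_mul (c - d)
    simpa using (tendsto_const_nhds (x := (1:ℂ))).add this
  apply h0.congr'
  filter_upwards [eventually_ge_atTop (⌈‖d‖ + 1⌉₊)] with n hn
  have hn' : ‖d‖ + 1 ≤ (n : ℝ) := by
    calc ‖d‖ + 1 ≤ (⌈‖d‖ + 1⌉₊ : ℝ) := Nat.le_ceil _
    _ ≤ (n : ℝ) := by exact_mod_cast hn
  have hne : ((n : ℂ) + d) ≠ 0 := by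
    intro h
    have := congrArg norm h
    simp only [norm_zero] at this
    have hlb : (n : ℝ) - ‖d‖ ≤ ‖(n : ℂ) + d‖ := by
      have h2 := norm_sub_norm_le ((n : ℂ)) (-d)
      simpa [sub_neg_eq_add] using h2
    rw [this] at hlb
    linarith
  field_simp
  ring


lemma prod_cast_factorial (m : ℕ) :
    (∏ j ∈ range m, ((j : ℂ) + 1)) = (m.factorial : ℂ) := by
  induction m with
  | zero => simp
  | succ m ih => rw [prod_range_succ, ih, Nat.factorial_succ]; push_cast; ring

lemma prod_real_two_div (m : ℕ) :
    (∏ j ∈ range m, (2 / ((j : ℝ) + 1))) = 2 ^ m / m.factorial := by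
  induction m with
  | zero => simp
  | succ m ih =>
    rw [prod_range_succ, ih, Nat.factorial_succ, pow_succ]
    have h1 : ((m : ℝ) + 1) ≠ 0 := by positivity
    have h2 : (m.factorial : ℝ) ≠ 0 := Nat.cast_ne_zero.mpr m.factorial_ne_zero
    field_simp
    push_cast
    ring

lemma pt_tendsto (a : ℝ) (x : ℂ) (m : ℕ) :
    Tendsto (fun n : ℕ => pt a x n m) atTop (𝓝 ((-(a : ℂ)) ^ m * ((m.factorial : ℂ))⁻¹)) := by
  have hprod : Tendsto
      (fun n : ℕ => ∏ j ∈ range m,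
        (((n : ℂ) + (j : ℂ) + 1) / (((j : ℂ) + 1) * ((n : ℂ) + (j : ℂ) + 1 - x))))
      atTop (𝓝 (∏ j ∈ range m, ((j : ℂ) + 1)⁻¹)) := by
    apply tendsto_finset_prod
    intro j _
    have h := (tendsto_ratio ((j : ℂ) + 1) ((j : ℂ) + 1 - x)).const_mul (((j : ℂ) + 1)⁻¹)
    have heq : ∀ n : ℕ,
        ((j : ℂ) + 1)⁻¹ * (((n : ℂ) + ((j : ℂ) + 1)) * (((n : ℂ) + ((j : ℂ) + 1 - x))⁻¹))
          = ((n : ℂ) + (j : ℂ) + 1) / (((j : ℂ) + 1) * ((n : ℂ) + (j : ℂ) + 1 - x)) := by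
      intro n
      rw [div_eq_mul_inv, mul_inv]
      ring_nf
    rw [show ((j : ℂ) + 1)⁻¹ * 1 = ((j : ℂ) + 1)⁻¹ from mul_one _] at h
    exact h.congr heq
  have := hprod.const_mul ((-(a : ℂ)) ^ m)
  rw [show (∏ j ∈ range m, ((j : ℂ) + 1)⁻¹) = ((m.factorial : ℂ))⁻¹ from by
    rw [← prod_cast_factorial m, ← Finset.prod_inv_distrib]] at this
  exact this.congr (fun n => rfl)

lemma pt_bound (a : ℝ) (ha : 0 < a) (x : ℂ) (n m : ℕ) (hn : 2 * ‖x‖ ≤ (n : ℝ)) :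
    ‖pt a x n m‖ ≤ (2 * a) ^ m / m.factorial := by
  rw [pt, norm_mul, norm_pow, norm_neg, Complex.norm_real, Real.norm_eq_abs, abs_of_pos ha,
    norm_prod]
  have hb : ∀ j ∈ range m,
      ‖((n : ℂ) + (j : ℂ) + 1) / (((j : ℂ) + 1) * ((n : ℂ) + (j : ℂ) + 1 - x))‖
        ≤ 2 / ((j : ℝ) + 1) := by
    intro j _
    rw [norm_div, norm_mul]
    have h1 : ‖((n : ℂ) + (j : ℂ) + 1)‖ = (n : ℝ) + j + 1 := by
      rw [show ((n : ℂ) + (j : ℂ) + 1) = (((n + j + 1 : ℕ)) : ℂ) from by push_cast; ring,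
        Complex.norm_natCast]
      push_cast; ring
    have h2 : ‖((j : ℂ) + 1)‖ = (j : ℝ) + 1 := by
      rw [show ((j : ℂ) + 1) = (((j + 1 : ℕ)) : ℂ) from by push_cast; ring, Complex.norm_natCast]
      push_cast; ring
    have h3 : ((n : ℝ) + j + 1) / 2 ≤ ‖((n : ℂ) + (j : ℂ) + 1 - x)‖ := by
      have h4 : ‖((n : ℂ) + (j : ℂ) + 1)‖ - ‖x‖ ≤ ‖((n : ℂ) + (j : ℂ) + 1 - x)‖ :=
        norm_sub_norm_le _ _
      rw [h1] at h4
      have hj : (0:ℝ) ≤ j := Nat.cast_nonneg j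
      linarith
    rw [h1, h2]
    have hjpos : (0:ℝ) < (j : ℝ) + 1 := by positivity
    have hnorm_pos : (0:ℝ) < ‖((n : ℂ) + (j : ℂ) + 1 - x)‖ := by
      have hj : (0:ℝ) ≤ j := Nat.cast_nonneg j
      linarith [h3]
    rw [div_le_div_iff₀ (by positivity) hjpos]
    have hj : (0:ℝ) ≤ j := Nat.cast_nonneg j
    nlinarith [h3]
  calc a ^ m * ∏ j ∈ range m,
        ‖((n : ℂ) + (j : ℂ) + 1) / (((j : ℂ) + 1) * ((n : ℂ) + (j : ℂ) + 1 - x))‖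
      ≤ a ^ m * ∏ j ∈ range m, (2 / ((j : ℝ) + 1)) := by
        apply mul_le_mul_of_nonneg_left _ (by positivity)
        exact Finset.prod_le_prod (fun j _ => norm_nonneg _) hb
    _ = (2 * a) ^ m / m.factorial := by
        rw [prod_real_two_div, mul_pow]
        field_simp


end AssocCharlierMH

open AssocCharlierMH

/-- Let `Cs` be the associated Charlier polynomials, satisfying
`x·C*_n = C*_{n+1} + (n+a)·C*_n + a·n·C*_{n−1}` for `n ≥ 1`, with `C*_0 = 0, C*_1 = 1`.
Then for every complex `x`,
`lim_{n→∞} (−1)ⁿ C*_n(x;a) / Γ(n−x) = −e^a ∑_{k=0}^∞ (−a)^k / Γ(1−x+k)`.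
(Mathlib's `Complex.Gamma` vanishes at the nonpositive integers, so each term
`1/Γ(1−x+k)` is `0` when `1−x+k` is a nonpositive integer, as intended.) -/
theorem assoc_charlier_mehler_heine_entire (a : ℝ) (ha : 0 < a) (Cs : ℕ → ℂ → ℂ)
    (hCs0 : ∀ x : ℂ, Cs 0 x = 0) (hCs1 : ∀ x : ℂ, Cs 1 x = 1)
    (hCsrec : ∀ x : ℂ, ∀ n : ℕ, x * Cs (n + 1) x =
      Cs (n + 2) x + (((n : ℂ) + 1) + (a : ℂ)) * Cs (n + 1) x +
        (a : ℂ) * ((n : ℂ) + 1) * Cs n x)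
    (x : ℂ) :
    Tendsto (fun n : ℕ => (-1 : ℂ) ^ n * Cs n x / Complex.Gamma ((n : ℂ) - x)) atTop
      (𝓝 (-(Real.exp a : ℂ) *
        ∑' k : ℕ, (-(a : ℂ)) ^ k / Complex.Gamma (1 - x + k))) := by
  have hane : (a : ℂ) ≠ 0 := by exact_mod_cast ha.ne'
  -- the numerator sequence
  set b : ℕ → ℂ := fun n => (-1 : ℂ) ^ n * Cs n x with hbdef
  set D : ℕ → ℂ := fun n => b n / Complex.Gamma ((n : ℂ) - x) with hDdef
  set G : ℕ → ℂ := fun n =>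
    Complex.Gamma ((n : ℂ) + 1 - x) * vv a x n * (((a : ℂ) ^ n * (n.factorial : ℂ)))⁻¹ with hGdef
  set ε : ℕ → ℂ := fun n =>
    (a : ℂ) * ((n : ℂ) + 1) * ((((n : ℂ) - x) * ((n : ℂ) + 1 - x)))⁻¹ with hεdef
  have hbrec : ∀ n : ℕ,
      b (n + 2) = ((n : ℂ) + 1 + a - x) * b (n + 1) - (a : ℂ) * ((n : ℂ) + 1) * b n := by
    intro n
    simp only [hbdef]
    linear_combination (-1 : ℂ) ^ (n + 1) * hCsrec x n
  have hK : ∀ n : ℕ, b (n + 1) * vv a x n - b n * vv a x (n + 1)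
      = -((a : ℂ) ^ n * (n.factorial : ℂ)) * vv a x 0 := by
    intro n
    induction n with
    | zero =>
      simp only [hbdef, hCs0 x, hCs1 x, pow_zero, pow_one, Nat.factorial_zero, Nat.cast_one,
        mul_zero, zero_mul, mul_one, sub_zero, one_mul]
      ring
    | succ n ih =>
      have h1 := hbrec n
      have h2 := vv_rec a ha x n
      rw [Nat.factorial_succ]
      push_cast
      linear_combination (vv a x (n + 1)) * h1 - (b (n + 1)) * h2
        + (a : ℂ) * ((n : ℂ) + 1) * ih
  set N : ℕ := ⌈2 * ‖x‖⌉₊ + 1 with hNdef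
  have hxre : x.re ≤ ‖x‖ := by
    exact Complex.re_le_norm x
  have hxn : 0 ≤ ‖x‖ := norm_nonneg x
  have hNfacts : ∀ n : ℕ, N ≤ n → 2 * ‖x‖ ≤ (n : ℝ) ∧ x.re + 1 ≤ (n : ℝ) := by
    intro n hn
    have h1 : (N : ℝ) ≤ (n : ℝ) := by exact_mod_cast hn
    have h2 : 2 * ‖x‖ ≤ (⌈2 * ‖x‖⌉₊ : ℝ) := Nat.le_ceil _
    have h3 : (N : ℝ) = (⌈2 * ‖x‖⌉₊ : ℝ) + 1 := by rw [hNdef]; push_cast; ring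
    constructor
    · linarith
    · linarith
  have hΓ0ne : ∀ n : ℕ, N ≤ n → Complex.Gamma ((n : ℂ) - x) ≠ 0 := by
    intro n hn
    apply Complex.Gamma_ne_zero_of_re_pos
    simp only [Complex.sub_re, Complex.natCast_re]
    linarith [(hNfacts n hn).2]
  have hΓ1ne : ∀ n : ℕ, N ≤ n → Complex.Gamma ((n : ℂ) + 1 - x) ≠ 0 := by
    intro n hn
    apply Complex.Gamma_ne_zero_of_re_pos
    simp only [Complex.sub_re, Complex.add_re, Complex.natCast_re, Complex.one_re]
    linarith [(hNfacts n hn).2]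
  have hzx : ∀ n : ℕ, N ≤ n → ((n : ℂ) - x) ≠ 0 := by
    intro n hn h0
    have : ((n : ℂ) - x).re = 0 := by rw [h0]; simp
    simp only [Complex.sub_re, Complex.natCast_re] at this
    linarith [(hNfacts n hn).2]
  have hzx1 : ∀ n : ℕ, N ≤ n → ((n : ℂ) + 1 - x) ≠ 0 := by
    intro n hn h0
    have : ((n : ℂ) + 1 - x).re = 0 := by rw [h0]; simp
    simp only [Complex.sub_re, Complex.add_re, Complex.natCast_re, Complex.one_re] at this
    linarith [(hNfacts n hn).2]
  have hG1 : ∀ n : ℕ, N ≤ n →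
      Complex.Gamma ((n : ℂ) + 1 - x) = ((n : ℂ) - x) * Complex.Gamma ((n : ℂ) - x) := by
    intro n hn
    rw [show (n : ℂ) + 1 - x = ((n : ℂ) - x) + 1 from by ring]
    exact Complex.Gamma_add_one _ (hzx n hn)
  have hG2 : ∀ n : ℕ, N ≤ n →
      Complex.Gamma ((n : ℂ) + 2 - x)
        = ((n : ℂ) + 1 - x) * Complex.Gamma ((n : ℂ) + 1 - x) := by
    intro n hn
    rw [show (n : ℂ) + 2 - x = ((n : ℂ) + 1 - x) + 1 from by ring]
    exact Complex.Gamma_add_one _ (hzx1 n hn)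
  -- the key identity
  have hId : ∀ n : ℕ, N ≤ n →
      D (n + 1) * G n = ε n * (D n * G (n + 1)) - vv a x 0 := by
    intro n hn
    have hfn : ((n.factorial : ℂ)) ≠ 0 := Nat.cast_ne_zero.mpr n.factorial_ne_zero
    have hc : ((a : ℂ) ^ n * (n.factorial : ℂ)) ≠ 0 := mul_ne_zero (pow_ne_zero n hane) hfn
    have hn1 : ((n : ℂ) + 1) ≠ 0 := by exact_mod_cast Nat.succ_ne_zero n
    have h1 : D (n + 1) * G n = b (n + 1) * vv a x n * (((a : ℂ) ^ n * (n.factorial : ℂ)))⁻¹ := by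
      simp only [hDdef, hGdef]
      rw [show (((n + 1 : ℕ)) : ℂ) - x = (n : ℂ) + 1 - x from by push_cast; ring]
      have hg := hΓ1ne n hn
      field_simp
    have h2 : ε n * (D n * G (n + 1))
        = b n * vv a x (n + 1) * (((a : ℂ) ^ n * (n.factorial : ℂ)))⁻¹ := by
      simp only [hDdef, hGdef, hεdef]
      rw [show (((n + 1 : ℕ)) : ℂ) + 1 - x = (n : ℂ) + 2 - x from by push_cast; ring,
        hG2 n hn, hG1 n hn, pow_succ, Nat.factorial_succ]
      push_cast
      field_simp
      rw [div_eq_iff (by simp [mul_eq_zero, hane, hΓ0ne n hn, hzx n hn, hzx1 n hn, hn1, hfn])]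
      ring
    rw [h1, h2]
    have h3 := hK n
    field_simp
    linear_combination h3
  -- limit of G
  have hGt : ∀ n, G n = ∑' m, gt' a x n m := by
    intro n
    simp only [gt', hGdef]
    rw [tsum_mul_right, tsum_mul_left]
    rfl
  have hGlim : Tendsto G atTop (𝓝 (Complex.exp (-(a : ℂ)))) := by
    have hval : (∑' m : ℕ, (-(a : ℂ)) ^ m * ((m.factorial : ℂ))⁻¹) = Complex.exp (-(a : ℂ)) := by
      rw [Complex.exp_eq_exp_ℂ, NormedSpace.exp_eq_tsum_div]
      exact tsum_congr fun m => by rw [div_eq_mul_inv]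
    have hdom := tendsto_tsum_of_dominated_convergence
      (f := fun (n : ℕ) (m : ℕ) => gt' a x n m)
      (g := fun m : ℕ => (-(a : ℂ)) ^ m * ((m.factorial : ℂ))⁻¹)
      (bound := fun m : ℕ => (2 * a) ^ m / m.factorial)
      (Real.summable_pow_div_factorial (2 * a))
      (fun m => by
        apply (pt_tendsto a x m).congr'
        filter_upwards [eventually_ge_atTop N] with n hn
        exact (gt_eq_pt a ha x n (by linarith [(hNfacts n hn).2]) m).symm)
      (by
        filter_upwards [eventually_ge_atTop N] with n hn
        intro m
        rw [gt_eq_pt a ha x n (by linarith [(hNfacts n hn).2]) m]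
        exact pt_bound a ha x n m (hNfacts n hn).1)
    rw [hval] at hdom
    exact (tendsto_congr fun n => (hGt n).symm).mp hdom
  -- limit of epsilon
  have hεlim : Tendsto ε atTop (𝓝 0) := by
    have h1 : Tendsto (fun n : ℕ => ((n : ℂ) + 1) * (((n : ℂ) + (-x))⁻¹)) atTop (𝓝 1) :=
      tendsto_ratio 1 (-x)
    have h2 : Tendsto (fun n : ℕ => ((n : ℂ) + (1 - x))⁻¹) atTop (𝓝 0) :=
      tendsto_inv_nat_add (1 - x)
    have h3 := ((h1.mul h2).const_mul (a : ℂ))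
    have h4 : Tendsto (fun n : ℕ =>
        (a : ℂ) * (((n : ℂ) + 1) * (((n : ℂ) + (-x))⁻¹) * ((n : ℂ) + (1 - x))⁻¹)) atTop (𝓝 0) := by
      simpa using h3
    apply h4.congr
    intro n
    simp only [hεdef]
    rw [mul_inv, show (n : ℂ) + (-x) = (n : ℂ) - x from by ring,
      show (n : ℂ) + (1 - x) = (n : ℂ) + 1 - x from by ring]
    ring
  -- norm of the limit
  set cr : ℝ := Real.exp (-a) with hcr
  have hcrpos : 0 < cr := Real.exp_pos _
  have hnormexp : ‖Complex.exp (-(a : ℂ))‖ = cr := by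
    have hre : (-(a : ℂ)).re = -a := by simp
    rw [Complex.norm_exp, hre]
  have hGnlim : Tendsto (fun n => G (n + 1)) atTop (𝓝 (Complex.exp (-(a : ℂ)))) :=
    hGlim.comp (tendsto_add_atTop_nat 1)
  have hεGlim : Tendsto (fun n => ε n * G (n + 1)) atTop (𝓝 0) := by
    simpa using hεlim.mul hGnlim
  -- pick a threshold
  have hev : ∀ᶠ n in atTop, cr / 2 < ‖G n‖ ∧ ‖ε n * G (n + 1)‖ < cr / 4 ∧ N ≤ n := by
    have e1 : ∀ᶠ n in atTop, cr / 2 < ‖G n‖ := by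
      have := hGlim.norm
      rw [hnormexp] at this
      exact this.eventually (eventually_gt_nhds (by linarith))
    have e2 : ∀ᶠ n in atTop, ‖ε n * G (n + 1)‖ < cr / 4 := by
      have := hεGlim.norm
      rw [norm_zero] at this
      exact this.eventually (eventually_lt_nhds (by linarith))
    exact e1.and (e2.and (eventually_ge_atTop N))
  obtain ⟨n₂, hn₂⟩ := eventually_atTop.mp hev
  set M : ℝ := max ‖D n₂‖ (4 * ‖vv a x 0‖ / cr) with hM
  have hMnonneg : 0 ≤ M := le_trans (norm_nonneg _) (le_max_left _ _)
  have hv0M : ‖vv a x 0‖ ≤ cr / 4 * M := by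
    have : 4 * ‖vv a x 0‖ / cr ≤ M := le_max_right _ _
    rw [div_le_iff₀ hcrpos] at this
    linarith
  have hDbk : ∀ k : ℕ, ‖D (n₂ + k)‖ ≤ M := by
    intro k
    induction k with
    | zero =>
      rw [Nat.add_zero, hM]
      exact le_max_left _ _
    | succ k ih =>
      have hnk : n₂ ≤ n₂ + k := Nat.le_add_right _ _
      obtain ⟨hg, he, hN⟩ := hn₂ (n₂ + k) hnk
      have hid := hId (n₂ + k) hN
      have hnorm : ‖D (n₂ + k + 1)‖ * ‖G (n₂ + k)‖
          ≤ ‖ε (n₂ + k) * G (n₂ + k + 1)‖ * ‖D (n₂ + k)‖ + ‖vv a x 0‖ := by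
        rw [← norm_mul, hid]
        calc ‖ε (n₂ + k) * (D (n₂ + k) * G (n₂ + k + 1)) - vv a x 0‖
            ≤ ‖ε (n₂ + k) * (D (n₂ + k) * G (n₂ + k + 1))‖ + ‖vv a x 0‖ := norm_sub_le _ _
          _ = ‖ε (n₂ + k) * G (n₂ + k + 1)‖ * ‖D (n₂ + k)‖ + ‖vv a x 0‖ := by
              rw [show ε (n₂ + k) * (D (n₂ + k) * G (n₂ + k + 1))
                  = (ε (n₂ + k) * G (n₂ + k + 1)) * D (n₂ + k) from by ring, norm_mul]
      have hstep : ‖D (n₂ + k + 1)‖ * ‖G (n₂ + k)‖ ≤ cr / 2 * M := by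
        have h5 : ‖ε (n₂ + k) * G (n₂ + k + 1)‖ * ‖D (n₂ + k)‖ ≤ cr / 4 * M := by
          have := mul_le_mul he.le ih (norm_nonneg _) (by linarith)
          linarith
        linarith
      have := mul_le_mul_of_nonneg_left hg.le (norm_nonneg (D (n₂ + k + 1)))
      show ‖D (n₂ + k + 1)‖ ≤ M
      nlinarith [norm_nonneg (D (n₂ + k + 1))]
  have hDM : ∀ᶠ n in atTop, ‖D n‖ ≤ M := by
    rw [eventually_atTop]
    exact ⟨n₂, fun n hn => by
      obtain ⟨k, rfl⟩ := Nat.exists_eq_add_of_le hn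
      exact hDbk k⟩
  -- null sequence
  have hnull : Tendsto (fun n => ε n * (D n * G (n + 1))) atTop (𝓝 0) := by
    have hg0 : Tendsto (fun n => ‖ε n * G (n + 1)‖ * M) atTop (𝓝 0) := by
      have := hεGlim.norm.mul_const M
      rw [norm_zero, zero_mul] at this
      exact this
    apply squeeze_zero_norm' _ hg0
    filter_upwards [hDM] with n hn
    rw [show ε n * (D n * G (n + 1)) = (ε n * G (n + 1)) * D n from by ring, norm_mul]
    exact mul_le_mul_of_nonneg_left hn (norm_nonneg _)
  -- main limits
  have h1lim : Tendsto (fun n => D (n + 1) * G n) atTop (𝓝 (-(vv a x 0))) := by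
    have := hnull.sub_const (vv a x 0)
    rw [zero_sub] at this
    apply this.congr'
    filter_upwards [eventually_ge_atTop N] with n hn
    exact (hId n hn).symm
  have h2lim : Tendsto (fun n => D (n + 1)) atTop
      (𝓝 (-(vv a x 0) / Complex.exp (-(a : ℂ)))) := by
    have hdiv := h1lim.div hGlim (Complex.exp_ne_zero _)
    apply hdiv.congr'
    filter_upwards [hev] with n hn
    have hgne : G n ≠ 0 := by
      intro h0
      rw [h0, norm_zero] at hn
      linarith [hn.1]
    exact mul_div_cancel_right₀ (D (n + 1)) hgne
  have h3lim : Tendsto D atTop (𝓝 (-(vv a x 0) / Complex.exp (-(a : ℂ)))) :=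
    (tendsto_add_atTop_iff_nat 1).mp h2lim
  -- identify the limit value
  have hvv0 : vv a x 0 = ∑' k : ℕ, (-(a : ℂ)) ^ k / Complex.Gamma (1 - x + k) := by
    rw [vv]
    apply tsum_congr
    intro m
    have hmf : ((m.factorial : ℂ)) ≠ 0 := Nat.cast_ne_zero.mpr m.factorial_ne_zero
    simp only [vt, Nat.zero_add, zero_add, Nat.cast_zero]
    rw [show (m : ℂ) + 1 - x = 1 - x + (m : ℂ) from by ring, div_eq_mul_inv,
      mul_inv_cancel_right₀ hmf]
    ring
  have hfinal : -(vv a x 0) / Complex.exp (-(a : ℂ))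
      = -(Real.exp a : ℂ) * ∑' k : ℕ, (-(a : ℂ)) ^ k / Complex.Gamma (1 - x + k) := by
    rw [Complex.exp_neg, div_eq_mul_inv, inv_inv, ← hvv0, Complex.ofReal_exp]
    ring
  rw [← hfinal]
  exact h3lim
end
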